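/- arXiv:1612.08198 — 3 statements merged into one kernel-verified Lean document; each statement's English description precedes it below -/
import Mathlib

section
/- Let d ≥ 1, let a be a jump kernel and b a rate-perturbation kernel, let ω ≥ 0, and let ϑ'' < ϑ be real numbers. Then for every correlation-type function k with ‖k‖_{ϑ''} < ∞, the function L^Δ k = A^Δ k + B^Δ k + C^Δ k + D^Δ k satisfies ‖L^Δ k‖_ϑ ≤ 2( (1 + ⟨b⟩ e^{ϑ}) / (e (ϑ − ϑ'')) + 4 b̄ / (e² (ϑ − ϑ'')²) ) ‖k‖_{ϑ''}. In particular L^Δ defines a bounded linear operator from K_{ϑ''} to K_ϑ. (Estimate (3.13) of the paper.) -/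
open MeasureTheory ENNReal Real Filter Finset

namespace Kawasaki

abbrev Rd (d : ℕ) := Fin d → ℝ

structure JumpKernel (d : ℕ) where
  a : Rd d → Rd d → ℝ
  measurable : Measurable fun p : Rd d × Rd d => a p.1 p.2
  nonneg : ∀ x y, 0 ≤ a x y
  symm : ∀ x y, a x y = a y x
  integrable : ∀ y, Integrable fun x => a x y
  sup_integral : (⨆ y : Rd d, ∫ x, a x y) = 1

structure RateKernel (d : ℕ) where
  b : Rd d → Rd d → Rd d → ℝ
  measurable : Measurable fun p : Rd d × Rd d × Rd d => b p.1 p.2.1 p.2.2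
  nonneg : ∀ x y z, 0 ≤ b x y z
  integrable : ∀ x y, Integrable fun z => b x y z
  int_bddAbove : BddAbove (Set.range fun p : Rd d × Rd d => ∫ z, b p.1 p.2 z)
  bddAbove : BddAbove (Set.range fun p : Rd d × Rd d × Rd d => b p.1 p.2.1 p.2.2)

/-- ⟨b⟩ -/
noncomputable def RateKernel.avg {d : ℕ} (B : RateKernel d) : ℝ :=
  ⨆ p : Rd d × Rd d, ∫ z, B.b p.1 p.2 z

/-- b̄ -/
noncomputable def RateKernel.bbar {d : ℕ} (B : RateKernel d) : ℝ :=
  ⨆ p : Rd d × Rd d × Rd d, B.b p.1 p.2.1 p.2.2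

abbrev Fam (d : ℕ) := ∀ n : ℕ, (Fin n → Rd d) → ℝ

structure CorrFun (d : ℕ) where
  k : Fam d
  measurable : ∀ n, Measurable (k n)
  symm : ∀ (n : ℕ) (σ : Equiv.Perm (Fin n)) (x : Fin n → Rd d), k n (x ∘ σ) = k n x

noncomputable def esssupAbs (d n : ℕ) (f : (Fin n → Rd d) → ℝ) : ℝ≥0∞ :=
  essSup (fun x => ENNReal.ofReal |f x|) volume

noncomputable def famNorm (d : ℕ) (f : Fam d) (ϑ : ℝ) : ℝ≥0∞ :=
  ⨆ n : ℕ, ENNReal.ofReal (Real.exp (-ϑ * n)) * esssupAbs d n (f n)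

noncomputable def phiPlus (d : ℕ) (A : JumpKernel d) (B : RateKernel d) (x y : Rd d) : ℝ :=
  ∫ z, A.a z x * B.b z x y

noncomputable def phiMinus (d : ℕ) (A : JumpKernel d) (B : RateKernel d) (x y : Rd d) : ℝ :=
  ∫ z, A.a x z * B.b x z y

noncomputable def PhiPlus (d : ℕ) (A : JumpKernel d) (B : RateKernel d) (n : ℕ)
    (x : Fin n → Rd d) : ℝ :=
  ∑ i : Fin n, ∑ j ∈ Finset.univ.erase i, phiPlus d A B (x i) (x j)

noncomputable def PhiMinus (d : ℕ) (A : JumpKernel d) (B : RateKernel d) (n : ℕ)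
    (x : Fin n → Rd d) : ℝ :=
  ∑ i : Fin n, ∑ j ∈ Finset.univ.erase i, phiMinus d A B (x i) (x j)

noncomputable def Psi (d : ℕ) (A : JumpKernel d) (B : RateKernel d) (n : ℕ)
    (x : Fin n → Rd d) : ℝ :=
  (∑ i : Fin n, ∫ y, A.a (x i) y) + PhiMinus d A B n x

noncomputable def ADelta (d : ℕ) (A : JumpKernel d) (B : RateKernel d) (k : Fam d) : Fam d :=
  fun n x => ∑ i : Fin n, ∫ x',
    A.a x' (x i) * (1 + ∑ j ∈ Finset.univ.erase i, B.b x' (x i) (x j)) *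
      k n (Function.update x i x')

noncomputable def BDelta (d : ℕ) (A : JumpKernel d) (B : RateKernel d) (k : Fam d) : Fam d :=
  fun n x => -(Psi d A B n x) * k n x

noncomputable def BDeltaOmega (d : ℕ) (A : JumpKernel d) (B : RateKernel d) (ω : ℝ)
    (k : Fam d) : Fam d :=
  fun n x => -(Psi d A B n x + ω * n) * k n x

noncomputable def CDelta (d : ℕ) (A : JumpKernel d) (B : RateKernel d) (k : Fam d) : Fam d :=
  fun n x => ∑ i : Fin n, ∫ x', ∫ z,
    A.a x' (x i) * B.b x' (x i) z * k (n + 1) (Fin.snoc (Function.update x i x') z)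

noncomputable def CDeltaOmega (d : ℕ) (A : JumpKernel d) (B : RateKernel d) (ω : ℝ)
    (k : Fam d) : Fam d :=
  fun n x => CDelta d A B k n x + ω * n * k n x

noncomputable def DDelta (d : ℕ) (A : JumpKernel d) (B : RateKernel d) (k : Fam d) : Fam d :=
  fun n x => -∫ z, (∑ i : Fin n, ∫ y, A.a (x i) y * B.b (x i) y z) * k (n + 1) (Fin.snoc x z)

noncomputable def LDelta (d : ℕ) (A : JumpKernel d) (B : RateKernel d) (k : Fam d) : Fam d :=
  fun n x => ADelta d A B k n x + BDelta d A B k n x + CDelta d A B k n x + DDelta d A B k n x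


/-! ### Auxiliary lemmas -/

section Aux

variable {d : ℕ}

lemma JumpKernel.integral_le_one (A : JumpKernel d) (y : Rd d) : ∫ x, A.a x y ≤ 1 := by
  have hbdd : BddAbove (Set.range fun y : Rd d => ∫ x, A.a x y) := by
    by_contra h
    have := A.sup_integral
    rw [Real.iSup_of_not_bddAbove h] at this
    norm_num at this
  calc ∫ x, A.a x y ≤ ⨆ y : Rd d, ∫ x, A.a x y := le_ciSup hbdd y
    _ = 1 := A.sup_integral

lemma JumpKernel.flip_eq (A : JumpKernel d) (u : Rd d) :
    (fun y => A.a u y) = fun y => A.a y u := funext fun y => A.symm u y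

lemma JumpKernel.integral_le_one' (A : JumpKernel d) (u : Rd d) : ∫ y, A.a u y ≤ 1 := by
  rw [show (fun y => A.a u y) = fun y => A.a y u from A.flip_eq u]
  exact A.integral_le_one u

lemma JumpKernel.integrable' (A : JumpKernel d) (u : Rd d) :
    Integrable fun y => A.a u y := by
  rw [A.flip_eq u]; exact A.integrable u

lemma RateKernel.le_bbar (B : RateKernel d) (x y z : Rd d) : B.b x y z ≤ B.bbar :=
  le_ciSup B.bddAbove (x, y, z)

lemma RateKernel.bbar_nonneg (B : RateKernel d) : 0 ≤ B.bbar :=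
  le_trans (B.nonneg 0 0 0) (B.le_bbar 0 0 0)

lemma RateKernel.integral_le_avg (B : RateKernel d) (x y : Rd d) :
    ∫ z, B.b x y z ≤ B.avg :=
  le_ciSup B.int_bddAbove (x, y)

lemma RateKernel.avg_nonneg (B : RateKernel d) : 0 ≤ B.avg :=
  le_trans (integral_nonneg fun z => B.nonneg 0 0 z) (B.integral_le_avg 0 0)

/-- Fubini-type lemma: inserting an a.e. free coordinate avoids a null set. -/
lemma ae_insertNth_notMem {m : ℕ} (i : Fin (m + 1)) {S : Set (Fin (m + 1) → Rd d)}
    (hS : MeasurableSet S) (h0 : volume S = 0) :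
    ∀ᵐ r : Fin m → Rd d, ∀ᵐ x' : Rd d, i.insertNth x' r ∉ S := by
  set e := MeasurableEquiv.piFinSuccAbove (fun _ : Fin (m + 1) => Rd d) i with he
  have mp : MeasurePreserving e volume volume :=
    volume_preserving_piFinSuccAbove (fun _ : Fin (m + 1) => Rd d) i
  set S₂ : Set ((Fin m → Rd d) × Rd d) := Prod.swap ⁻¹' (e.symm ⁻¹' S) with hS₂
  have hswap : MeasurePreserving (Prod.swap : (Fin m → Rd d) × Rd d → Rd d × (Fin m → Rd d))
      volume volume := by
    rw [Measure.volume_eq_prod, Measure.volume_eq_prod]; exact Measure.measurePreserving_swap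
  have mp2 : MeasurePreserving (fun p : (Fin m → Rd d) × Rd d => e.symm p.swap)
      volume volume := (mp.symm e).comp hswap
  have hS₂0 : (volume : Measure ((Fin m → Rd d) × Rd d)) S₂ = 0 := by
    have h := mp2.measure_preimage hS.nullMeasurableSet
    have hEq : S₂ = (fun p : (Fin m → Rd d) × Rd d => e.symm p.swap) ⁻¹' S := rfl
    rw [hEq, h, h0]
  have h1 := Measure.measure_ae_null_of_prod_null
    (μ := (volume : Measure (Fin m → Rd d))) (ν := (volume : Measure (Rd d)))
    (s := S₂) (by rw [← Measure.volume_eq_prod]; exact hS₂0)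
  filter_upwards [h1] with r hr
  have hkey : (volume : Measure (Rd d)) {x' | i.insertNth x' r ∈ S} = 0 := by
    have hEq : (Prod.mk r ⁻¹' S₂) = {x' | i.insertNth x' r ∈ S} := by
      ext x'
      simp [hS₂, e, MeasurableEquiv.piFinSuccAbove, Prod.swap, Fin.insertNthEquiv]
    rw [← hEq]
    simpa using hr
  exact (measure_eq_zero_iff_ae_notMem.mp hkey)

/-- Fubini-type lemma for `Function.update`. -/
lemma ae_update_notMem {n : ℕ} (i : Fin n) {S : Set (Fin n → Rd d)}
    (hS : MeasurableSet S) (h0 : volume S = 0) :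
    ∀ᵐ x : Fin n → Rd d, ∀ᵐ x' : Rd d, Function.update x i x' ∉ S := by
  match n, i with
  | (m + 1), i =>
    have key := ae_insertNth_notMem (d := d) i hS h0
    -- transfer along the second projection of the measurable equivalence
    set G : Set (Fin m → Rd d) := {r | ∀ᵐ x' : Rd d, i.insertNth x' r ∉ S} with hG
    have hGc : (volume : Measure (Fin m → Rd d)) Gᶜ = 0 := by
      have h := ae_iff.mp key
      have hEq : Gᶜ = {r : Fin m → Rd d | ¬ ∀ᵐ x' : Rd d, i.insertNth x' r ∉ S} := by
        ext r; simp [hG]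
      rw [hEq]; exact h
    set e := MeasurableEquiv.piFinSuccAbove (fun _ : Fin (m + 1) => Rd d) i with he
    have mp : MeasurePreserving e volume volume :=
      volume_preserving_piFinSuccAbove (fun _ : Fin (m + 1) => Rd d) i
    have hnull : (volume : Measure (Fin (m + 1) → Rd d))
        (e ⁻¹' (Set.univ ×ˢ Gᶜ)) = 0 := by
      apply mp.quasiMeasurePreserving.preimage_null
      rw [Measure.volume_eq_prod, Measure.prod_prod, hGc, mul_zero]
    have hx : ∀ᵐ x : Fin (m + 1) → Rd d, x ∉ e ⁻¹' (Set.univ ×ˢ Gᶜ) :=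
      measure_eq_zero_iff_ae_notMem.mp hnull
    filter_upwards [hx] with x hx'
    have h2 : Fin.removeNth i x ∈ G := by
      by_contra hc
      exact hx' ⟨trivial, hc⟩
    have h3 : ∀ᵐ x' : Rd d, i.insertNth x' (Fin.removeNth i x) ∉ S := h2
    filter_upwards [h3] with x' hx''
    rwa [Fin.insertNth_removeNth] at hx''

/-- Fubini-type lemma for `Fin.snoc`. -/
lemma ae_snoc_notMem {n : ℕ} {S : Set (Fin (n + 1) → Rd d)}
    (hS : MeasurableSet S) (h0 : volume S = 0) :
    ∀ᵐ x : Fin n → Rd d, ∀ᵐ z : Rd d, Fin.snoc x z ∉ S := by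
  have key := ae_insertNth_notMem (d := d) (Fin.last n) hS h0
  filter_upwards [key] with x hx
  filter_upwards [hx] with z hz
  rwa [Fin.insertNth_last'] at hz

/-- Fubini-type lemma for `Fin.snoc` after `Function.update`. -/
lemma ae_update_snoc_notMem {n : ℕ} (i : Fin n) {S : Set (Fin (n + 1) → Rd d)}
    (hS : MeasurableSet S) (h0 : volume S = 0) :
    ∀ᵐ x : Fin n → Rd d, ∀ᵐ x' : Rd d, ∀ᵐ z : Rd d,
      (Fin.snoc (Function.update x i x') z : Fin (n + 1) → Rd d) ∉ S := by
  set e := MeasurableEquiv.piFinSuccAbove (fun _ : Fin (n + 1) => Rd d) (Fin.last n) with he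
  have hsnoc_eq : (fun p : (Fin n → Rd d) × Rd d => (Fin.snoc p.1 p.2 : Fin (n + 1) → Rd d)) =
      fun p => e.symm p.swap := by
    funext p
    simp only [he, MeasurableEquiv.piFinSuccAbove, MeasurableEquiv.symm_mk,
      MeasurableEquiv.coe_mk, Equiv.symm_symm, Fin.insertNthEquiv_apply, Prod.snd_swap,
      Prod.fst_swap]
    simp [Fin.insertNthEquiv_last, Fin.snocEquiv]
  set S₃ : Set ((Fin n → Rd d) × Rd d) :=
    (fun p : (Fin n → Rd d) × Rd d => (Fin.snoc p.1 p.2 : Fin (n + 1) → Rd d)) ⁻¹' S with hS₃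
  have hS₃m : MeasurableSet S₃ := by
    rw [hS₃, hsnoc_eq]
    exact (e.symm.measurable.comp measurable_swap) hS
  have mp : MeasurePreserving e volume volume :=
    volume_preserving_piFinSuccAbove (fun _ : Fin (n + 1) => Rd d) (Fin.last n)
  have hswap : MeasurePreserving (Prod.swap : (Fin n → Rd d) × Rd d → Rd d × (Fin n → Rd d))
      volume volume := by
    rw [Measure.volume_eq_prod, Measure.volume_eq_prod]; exact Measure.measurePreserving_swap
  have mp2 : MeasurePreserving (fun p : (Fin n → Rd d) × Rd d => e.symm p.swap)
      volume volume := (mp.symm e).comp hswap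
  have hS₃0 : (volume : Measure ((Fin n → Rd d) × Rd d)) S₃ = 0 := by
    rw [hS₃, hsnoc_eq, mp2.measure_preimage hS.nullMeasurableSet, h0]
  have h1 := Measure.measure_ae_null_of_prod_null
    (μ := (volume : Measure (Fin n → Rd d))) (ν := (volume : Measure (Rd d)))
    (s := S₃) (by rw [← Measure.volume_eq_prod]; exact hS₃0)
  set T : Set (Fin n → Rd d) :=
    {y | (volume : Measure (Rd d)) (Prod.mk y ⁻¹' S₃) ≠ 0} with hT
  have hTm : MeasurableSet T := by
    have := measurable_measure_prodMk_left (ν := (volume : Measure (Rd d))) hS₃m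
    exact this (measurableSet_singleton 0).compl
  have hT0 : (volume : Measure (Fin n → Rd d)) T = 0 := by
    have h' : ∀ᵐ y : Fin n → Rd d, (volume : Measure (Rd d)) (Prod.mk y ⁻¹' S₃) = 0 := by
      filter_upwards [h1] with y hy; simpa using hy
    exact ae_iff.mp h'
  filter_upwards [ae_update_notMem i hTm hT0] with x hx
  filter_upwards [hx] with x' hx'
  have hz0 : (volume : Measure (Rd d)) (Prod.mk (Function.update x i x') ⁻¹' S₃) = 0 :=
    not_ne_iff.mp hx'
  filter_upwards [measure_eq_zero_iff_ae_notMem.mp hz0] with z hz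
  exact hz

lemma phiMinus_nonneg (A : JumpKernel d) (B : RateKernel d) (u v : Rd d) :
    0 ≤ phiMinus d A B u v :=
  integral_nonneg fun z => mul_nonneg (A.nonneg u z) (B.nonneg u z v)

lemma phiMinus_le_bbar (A : JumpKernel d) (B : RateKernel d) (u v : Rd d) :
    phiMinus d A B u v ≤ B.bbar := by
  have hint : Integrable (fun z => B.bbar * A.a u z) := (A.integrable' u).const_mul _
  have h1 : phiMinus d A B u v ≤ ∫ z, B.bbar * A.a u z := by
    refine integral_mono_of_nonneg
      (Eventually.of_forall fun z => mul_nonneg (A.nonneg u z) (B.nonneg u z v)) hint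
      (Eventually.of_forall fun z => ?_)
    calc A.a u z * B.b u z v ≤ A.a u z * B.bbar :=
          mul_le_mul_of_nonneg_left (B.le_bbar u z v) (A.nonneg u z)
      _ = B.bbar * A.a u z := mul_comm _ _
  calc phiMinus d A B u v ≤ ∫ z, B.bbar * A.a u z := h1
    _ = B.bbar * ∫ z, A.a u z := integral_const_mul _ _
    _ ≤ B.bbar * 1 := mul_le_mul_of_nonneg_left (A.integral_le_one' u) B.bbar_nonneg
    _ = B.bbar := mul_one _

lemma Psi_nonneg (A : JumpKernel d) (B : RateKernel d) (n : ℕ) (x : Fin n → Rd d) :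
    0 ≤ Psi d A B n x := by
  apply add_nonneg
  · exact Finset.sum_nonneg fun i _ => integral_nonneg fun y => A.nonneg (x i) y
  · exact Finset.sum_nonneg fun i _ => Finset.sum_nonneg fun j _ => phiMinus_nonneg A B _ _

lemma Psi_le (A : JumpKernel d) (B : RateKernel d) (n : ℕ) (x : Fin n → Rd d) :
    Psi d A B n x ≤ n * (1 + n * B.bbar) := by
  have h1 : (∑ i : Fin n, ∫ y, A.a (x i) y) ≤ (n : ℝ) := by
    calc (∑ i : Fin n, ∫ y, A.a (x i) y) ≤ ∑ _i : Fin n, (1 : ℝ) :=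
        Finset.sum_le_sum fun i _ => A.integral_le_one' (x i)
      _ = (n : ℝ) := by simp
  have h2 : PhiMinus d A B n x ≤ (n : ℝ) * ((n : ℝ) * B.bbar) := by
    have hin : ∀ i : Fin n, (∑ j ∈ Finset.univ.erase i, phiMinus d A B (x i) (x j)) ≤
        (n : ℝ) * B.bbar := by
      intro i
      calc (∑ j ∈ Finset.univ.erase i, phiMinus d A B (x i) (x j))
          ≤ ∑ _j ∈ Finset.univ.erase i, B.bbar :=
            Finset.sum_le_sum fun j _ => phiMinus_le_bbar A B _ _
        _ = ((Finset.univ.erase i).card : ℝ) * B.bbar := by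
            rw [Finset.sum_const, nsmul_eq_mul]
        _ ≤ (n : ℝ) * B.bbar := by
            apply mul_le_mul_of_nonneg_right _ B.bbar_nonneg
            have hc : (Finset.univ.erase i).card ≤ n := by
              have := Finset.card_erase_le (s := (Finset.univ : Finset (Fin n))) (a := i)
              simpa using this
            exact_mod_cast hc
    calc PhiMinus d A B n x ≤ ∑ _i : Fin n, (n : ℝ) * B.bbar :=
        Finset.sum_le_sum fun i _ => hin i
      _ = (n : ℝ) * ((n : ℝ) * B.bbar) := by
        rw [Finset.sum_const, Finset.card_univ, Fintype.card_fin, nsmul_eq_mul]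
  have := add_le_add h1 h2
  calc Psi d A B n x ≤ (n : ℝ) + (n : ℝ) * ((n : ℝ) * B.bbar) := this
    _ = n * (1 + n * B.bbar) := by ring

lemma estA (A : JumpKernel d) (B : RateKernel d) (k : Fam d) (n : ℕ) (Mn : ℝ) (hMn : 0 ≤ Mn)
    (x : Fin n → Rd d)
    (h1 : ∀ i : Fin n, ∀ᵐ x' : Rd d, |k n (Function.update x i x')| ≤ Mn) :
    |ADelta d A B k n x| ≤ n * ((1 + n * B.bbar) * Mn) := by
  have hc0 : (0:ℝ) ≤ 1 + n * B.bbar := by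
    have := B.bbar_nonneg; positivity
  set F : Fin n → Rd d → ℝ := fun i x' =>
    A.a x' (x i) * (1 + ∑ j ∈ Finset.univ.erase i, B.b x' (x i) (x j)) *
      k n (Function.update x i x') with hF
  have hAD : ADelta d A B k n x = ∑ i : Fin n, ∫ x', F i x' := rfl
  have hterm : ∀ i : Fin n, |∫ x', F i x'| ≤ (1 + n * B.bbar) * Mn := by
    intro i
    have hint : Integrable (fun x' => ((1 + n * B.bbar) * Mn) * A.a x' (x i)) :=
      (A.integrable (x i)).const_mul _
    have hle : |∫ x', F i x'| ≤ ∫ x', |F i x'| := by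
      simpa only [Real.norm_eq_abs] using norm_integral_le_integral_norm (μ := volume) (F i)
    refine hle.trans ?_
    have h2 : (∫ x', |F i x'|) ≤ ∫ x', ((1 + n * B.bbar) * Mn) * A.a x' (x i) := by
      refine integral_mono_of_nonneg (Eventually.of_forall fun x' => abs_nonneg _) hint ?_
      filter_upwards [h1 i] with x' hx'
      have hb0 : 0 ≤ ∑ j ∈ Finset.univ.erase i, B.b x' (x i) (x j) :=
        Finset.sum_nonneg fun j _ => B.nonneg _ _ _
      have hble : (1 + ∑ j ∈ Finset.univ.erase i, B.b x' (x i) (x j)) ≤ 1 + n * B.bbar := by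
        have hcard := Finset.sum_le_card_nsmul (Finset.univ.erase i)
          (fun j => B.b x' (x i) (x j)) B.bbar (fun j _ => B.le_bbar _ _ _)
        rw [nsmul_eq_mul] at hcard
        have hcard' : (((Finset.univ.erase i).card : ℝ)) * B.bbar ≤ (n : ℝ) * B.bbar := by
          apply mul_le_mul_of_nonneg_right _ B.bbar_nonneg
          have hc : (Finset.univ.erase i).card ≤ n := by
            have := Finset.card_erase_le (s := (Finset.univ : Finset (Fin n))) (a := i)
            simpa using this
          exact_mod_cast hc
        linarith
      simp only [hF]
      rw [abs_mul, abs_mul, abs_of_nonneg (A.nonneg _ _),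
        abs_of_nonneg (by linarith : (0:ℝ) ≤ 1 + ∑ j ∈ Finset.univ.erase i, B.b x' (x i) (x j))]
      calc A.a x' (x i) * (1 + ∑ j ∈ Finset.univ.erase i, B.b x' (x i) (x j)) *
            |k n (Function.update x i x')|
          ≤ A.a x' (x i) * ((1 + n * B.bbar) * Mn) := by
            rw [mul_assoc]
            refine mul_le_mul_of_nonneg_left ?_ (A.nonneg _ _)
            exact mul_le_mul hble hx' (abs_nonneg _) hc0
        _ = ((1 + n * B.bbar) * Mn) * A.a x' (x i) := mul_comm _ _
    refine h2.trans ?_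
    rw [integral_const_mul]
    calc ((1 + n * B.bbar) * Mn) * ∫ x', A.a x' (x i)
        ≤ ((1 + n * B.bbar) * Mn) * 1 :=
          mul_le_mul_of_nonneg_left (A.integral_le_one _) (by positivity)
      _ = (1 + n * B.bbar) * Mn := mul_one _
  rw [hAD]
  calc |∑ i : Fin n, ∫ x', F i x'| ≤ ∑ i : Fin n, |∫ x', F i x'| :=
      Finset.abs_sum_le_sum_abs _ _
    _ ≤ ∑ _i : Fin n, (1 + n * B.bbar) * Mn := Finset.sum_le_sum fun i _ => hterm i
    _ = n * ((1 + n * B.bbar) * Mn) := by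
      rw [Finset.sum_const, Finset.card_univ, Fintype.card_fin, nsmul_eq_mul]

lemma estB (A : JumpKernel d) (B : RateKernel d) (k : Fam d) (n : ℕ) (Mn : ℝ)
    (x : Fin n → Rd d) (h0 : |k n x| ≤ Mn) :
    |BDelta d A B k n x| ≤ n * ((1 + n * B.bbar) * Mn) := by
  have hψ0 := Psi_nonneg A B n x
  have hψ := Psi_le A B n x
  have hc0 : (0:ℝ) ≤ (n : ℝ) * (1 + n * B.bbar) := by
    have := B.bbar_nonneg; positivity
  calc |BDelta d A B k n x| = Psi d A B n x * |k n x| := by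
        rw [BDelta, abs_mul, abs_neg, abs_of_nonneg hψ0]
    _ ≤ ((n : ℝ) * (1 + n * B.bbar)) * Mn :=
        mul_le_mul hψ h0 (abs_nonneg _) hc0
    _ = n * ((1 + n * B.bbar) * Mn) := by ring

lemma estC (A : JumpKernel d) (B : RateKernel d) (k : Fam d) (n : ℕ) (Mn1 : ℝ)
    (hMn1 : 0 ≤ Mn1) (x : Fin n → Rd d)
    (h2 : ∀ i : Fin n, ∀ᵐ x' : Rd d, ∀ᵐ z : Rd d,
      |k (n + 1) (Fin.snoc (Function.update x i x') z)| ≤ Mn1) :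
    |CDelta d A B k n x| ≤ n * (B.avg * Mn1) := by
  set F : Fin n → Rd d → ℝ := fun i x' => ∫ z,
    A.a x' (x i) * B.b x' (x i) z * k (n + 1) (Fin.snoc (Function.update x i x') z) with hF
  have hCD : CDelta d A B k n x = ∑ i : Fin n, ∫ x', F i x' := rfl
  have hterm : ∀ i : Fin n, |∫ x', F i x'| ≤ B.avg * Mn1 := by
    intro i
    have hint2 : Integrable (fun x' => (B.avg * Mn1) * A.a x' (x i)) :=
      (A.integrable (x i)).const_mul _
    have hle : |∫ x', F i x'| ≤ ∫ x', |F i x'| := by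
      simpa only [Real.norm_eq_abs] using norm_integral_le_integral_norm (μ := volume) (F i)
    refine hle.trans ?_
    have h2' : (∫ x', |F i x'|) ≤ ∫ x', (B.avg * Mn1) * A.a x' (x i) := by
      refine integral_mono_of_nonneg (Eventually.of_forall fun x' => abs_nonneg _) hint2 ?_
      filter_upwards [h2 i] with x' hx'
      -- inner integral bound
      have hintz : Integrable (fun z => (A.a x' (x i) * Mn1) * B.b x' (x i) z) :=
        (B.integrable _ _).const_mul _
      have hinner : |F i x'| ≤ (A.a x' (x i) * Mn1) * (∫ z, B.b x' (x i) z) := by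
        have hlz : |F i x'| ≤ ∫ z, |A.a x' (x i) * B.b x' (x i) z *
            k (n + 1) (Fin.snoc (Function.update x i x') z)| := by
          simp only [hF]
          simpa only [Real.norm_eq_abs] using norm_integral_le_integral_norm (μ := volume)
            (fun z => A.a x' (x i) * B.b x' (x i) z *
              k (n + 1) (Fin.snoc (Function.update x i x') z))
        refine hlz.trans ?_
        have : (∫ z, |A.a x' (x i) * B.b x' (x i) z *
            k (n + 1) (Fin.snoc (Function.update x i x') z)|) ≤
            ∫ z, (A.a x' (x i) * Mn1) * B.b x' (x i) z := by
          refine integral_mono_of_nonneg (Eventually.of_forall fun z => abs_nonneg _) hintz ?_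
          filter_upwards [hx'] with z hz
          rw [abs_mul, abs_mul, abs_of_nonneg (A.nonneg _ _), abs_of_nonneg (B.nonneg _ _ _)]
          calc A.a x' (x i) * B.b x' (x i) z * |k (n + 1) (Fin.snoc (Function.update x i x') z)|
              ≤ A.a x' (x i) * B.b x' (x i) z * Mn1 := by
                refine mul_le_mul_of_nonneg_left hz ?_
                exact mul_nonneg (A.nonneg _ _) (B.nonneg _ _ _)
            _ = (A.a x' (x i) * Mn1) * B.b x' (x i) z := by ring
        refine this.trans ?_
        rw [integral_const_mul]
      refine hinner.trans ?_
      calc (A.a x' (x i) * Mn1) * (∫ z, B.b x' (x i) z)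
          ≤ (A.a x' (x i) * Mn1) * B.avg := by
            refine mul_le_mul_of_nonneg_left (B.integral_le_avg _ _) ?_
            exact mul_nonneg (A.nonneg _ _) hMn1
        _ = (B.avg * Mn1) * A.a x' (x i) := by ring
    refine h2'.trans ?_
    rw [integral_const_mul]
    calc (B.avg * Mn1) * ∫ x', A.a x' (x i)
        ≤ (B.avg * Mn1) * 1 := by
          refine mul_le_mul_of_nonneg_left (A.integral_le_one _) ?_
          exact mul_nonneg B.avg_nonneg hMn1
      _ = B.avg * Mn1 := mul_one _
  rw [hCD]
  calc |∑ i : Fin n, ∫ x', F i x'| ≤ ∑ i : Fin n, |∫ x', F i x'| :=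
      Finset.abs_sum_le_sum_abs _ _
    _ ≤ ∑ _i : Fin n, B.avg * Mn1 := Finset.sum_le_sum fun i _ => hterm i
    _ = n * (B.avg * Mn1) := by
      rw [Finset.sum_const, Finset.card_univ, Fintype.card_fin, nsmul_eq_mul]

lemma D_aux (A : JumpKernel d) (B : RateKernel d) (u : Rd d) :
    Integrable (fun z => ∫ y, A.a u y * B.b u y z) ∧
      (∫ z, ∫ y, A.a u y * B.b u y z) ≤ B.avg := by
  have hmF : Measurable (fun p : Rd d × Rd d => A.a u p.2 * B.b u p.2 p.1) := by
    apply Measurable.mul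
    · exact A.measurable.comp (measurable_const.prodMk measurable_snd)
    · exact B.measurable.comp (measurable_const.prodMk (measurable_snd.prodMk measurable_fst))
  have hnn : ∀ p : Rd d × Rd d, 0 ≤ A.a u p.2 * B.b u p.2 p.1 :=
    fun p => mul_nonneg (A.nonneg _ _) (B.nonneg _ _ _)
  have hint : Integrable (fun p : Rd d × Rd d => A.a u p.2 * B.b u p.2 p.1)
      ((volume : Measure (Rd d)).prod (volume : Measure (Rd d))) := by
    refine ⟨hmF.aestronglyMeasurable, ?_⟩
    rw [hasFiniteIntegral_iff_norm]
    have hrw : ∀ p : Rd d × Rd d, ENNReal.ofReal ‖A.a u p.2 * B.b u p.2 p.1‖ =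
        ENNReal.ofReal (A.a u p.2 * B.b u p.2 p.1) := by
      intro p; rw [Real.norm_eq_abs, abs_of_nonneg (hnn p)]
    calc (∫⁻ p, ENNReal.ofReal ‖A.a u p.2 * B.b u p.2 p.1‖ ∂(volume.prod volume))
        = ∫⁻ z, ∫⁻ y, ENNReal.ofReal (A.a u y * B.b u y z) ∂volume ∂volume := by
          simp_rw [hrw]
          exact MeasureTheory.lintegral_prod _ (hmF.ennreal_ofReal.aemeasurable)
      _ = ∫⁻ y, ∫⁻ z, ENNReal.ofReal (A.a u y * B.b u y z) ∂volume ∂volume := by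
          exact lintegral_lintegral_swap (hmF.ennreal_ofReal.aemeasurable)
      _ ≤ ∫⁻ y, ENNReal.ofReal (A.a u y) * ENNReal.ofReal B.avg ∂volume := by
          refine lintegral_mono fun y => ?_
          calc (∫⁻ z, ENNReal.ofReal (A.a u y * B.b u y z) ∂volume)
              = ∫⁻ z, ENNReal.ofReal (A.a u y) * ENNReal.ofReal (B.b u y z) ∂volume := by
                simp_rw [ENNReal.ofReal_mul (A.nonneg u y)]
            _ = ENNReal.ofReal (A.a u y) * ∫⁻ z, ENNReal.ofReal (B.b u y z) ∂volume := by
                apply lintegral_const_mul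
                exact (B.measurable.comp
                  (measurable_const.prodMk (measurable_const.prodMk measurable_id))).ennreal_ofReal
            _ = ENNReal.ofReal (A.a u y) * ENNReal.ofReal (∫ z, B.b u y z) := by
                rw [ofReal_integral_eq_lintegral_ofReal (B.integrable u y)
                  (Eventually.of_forall fun z => B.nonneg u y z)]
            _ ≤ ENNReal.ofReal (A.a u y) * ENNReal.ofReal B.avg :=
                mul_le_mul_right (ENNReal.ofReal_le_ofReal (B.integral_le_avg u y)) _
      _ = (∫⁻ y, ENNReal.ofReal (A.a u y) ∂volume) * ENNReal.ofReal B.avg := by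
          apply lintegral_mul_const
          exact (A.measurable.comp (measurable_const.prodMk measurable_id)).ennreal_ofReal
      _ = ENNReal.ofReal (∫ y, A.a u y) * ENNReal.ofReal B.avg := by
          rw [ofReal_integral_eq_lintegral_ofReal (A.integrable' u)
            (Eventually.of_forall fun y => A.nonneg u y)]
      _ < ⊤ := ENNReal.mul_lt_top ENNReal.ofReal_lt_top ENNReal.ofReal_lt_top
  constructor
  · have := hint.integral_prod_left
    simpa using this
  · have hswap := integral_integral_swap (f := fun z y => A.a u y * B.b u y z)
      (by exact hint)
    rw [hswap]
    have hg : Integrable (fun y => A.a u y * B.avg) := (A.integrable' u).mul_const _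
    have h1 : (∫ y, ∫ z, A.a u y * B.b u y z) ≤ ∫ y, A.a u y * B.avg := by
      refine integral_mono_of_nonneg (Eventually.of_forall fun y =>
        integral_nonneg fun z => mul_nonneg (A.nonneg _ _) (B.nonneg _ _ _)) hg
        (Eventually.of_forall fun y => ?_)
      dsimp only
      rw [integral_const_mul]
      exact mul_le_mul_of_nonneg_left (B.integral_le_avg u y) (A.nonneg u y)
    refine h1.trans ?_
    rw [integral_mul_const]
    calc (∫ y, A.a u y) * B.avg ≤ 1 * B.avg :=
        mul_le_mul_of_nonneg_right (A.integral_le_one' u) B.avg_nonneg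
      _ = B.avg := one_mul _

lemma estD (A : JumpKernel d) (B : RateKernel d) (k : Fam d) (n : ℕ) (Mn1 : ℝ)
    (hMn1 : 0 ≤ Mn1) (x : Fin n → Rd d)
    (h3 : ∀ᵐ z : Rd d, |k (n + 1) (Fin.snoc x z)| ≤ Mn1) :
    |DDelta d A B k n x| ≤ n * (B.avg * Mn1) := by
  set H : Rd d → ℝ := fun z => ∑ i : Fin n, ∫ y, A.a (x i) y * B.b (x i) y z with hH
  have hDD : DDelta d A B k n x = -∫ z, H z * k (n + 1) (Fin.snoc x z) := rfl
  have hHint : Integrable H := integrable_finset_sum _ fun i _ => (D_aux A B (x i)).1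
  have hH0 : ∀ z, 0 ≤ H z := fun z =>
    Finset.sum_nonneg fun i _ => integral_nonneg fun y =>
      mul_nonneg (A.nonneg _ _) (B.nonneg _ _ _)
  have hintH : (∫ z, H z) ≤ n * B.avg := by
    rw [hH, integral_finset_sum _ fun i _ => (D_aux A B (x i)).1]
    calc (∑ i : Fin n, ∫ z, ∫ y, A.a (x i) y * B.b (x i) y z)
        ≤ ∑ _i : Fin n, B.avg := Finset.sum_le_sum fun i _ => (D_aux A B (x i)).2
      _ = n * B.avg := by
        rw [Finset.sum_const, Finset.card_univ, Fintype.card_fin, nsmul_eq_mul]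
  rw [hDD, abs_neg]
  have hle : |∫ z, H z * k (n + 1) (Fin.snoc x z)| ≤ ∫ z, |H z * k (n + 1) (Fin.snoc x z)| := by
    simpa only [Real.norm_eq_abs] using norm_integral_le_integral_norm (μ := volume)
      (fun z => H z * k (n + 1) (Fin.snoc x z))
  refine hle.trans ?_
  have h2 : (∫ z, |H z * k (n + 1) (Fin.snoc x z)|) ≤ ∫ z, H z * Mn1 := by
    refine integral_mono_of_nonneg (Eventually.of_forall fun z => abs_nonneg _)
      (hHint.mul_const _) ?_
    filter_upwards [h3] with z hz
    rw [abs_mul, abs_of_nonneg (hH0 z)]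
    exact mul_le_mul_of_nonneg_left hz (hH0 z)
  refine h2.trans ?_
  rw [integral_mul_const]
  calc (∫ z, H z) * Mn1 ≤ ((n : ℝ) * B.avg) * Mn1 :=
      mul_le_mul_of_nonneg_right hintH hMn1
    _ = n * (B.avg * Mn1) := by ring

lemma t_exp_le (t : ℝ) (ht : 0 ≤ t) : t * Real.exp (-t) ≤ (Real.exp 1)⁻¹ := by
  have h := Real.add_one_le_exp (t - 1)
  have h1 : t ≤ Real.exp (t - 1) := by linarith
  calc t * Real.exp (-t) ≤ Real.exp (t - 1) * Real.exp (-t) :=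
      mul_le_mul_of_nonneg_right h1 (Real.exp_nonneg _)
    _ = Real.exp (-1) := by rw [← Real.exp_add]; ring_nf
    _ = (Real.exp 1)⁻¹ := by rw [Real.exp_neg]

lemma nat_exp_le (α : ℝ) (hα : 0 < α) (n : ℕ) :
    (n : ℝ) * Real.exp (-(α * n)) ≤ (Real.exp 1 * α)⁻¹ := by
  have h := t_exp_le (α * n) (by positivity)
  calc (n : ℝ) * Real.exp (-(α * n)) = α⁻¹ * (α * n * Real.exp (-(α * n))) := by
        rw [← mul_assoc, ← mul_assoc, inv_mul_cancel₀ hα.ne', one_mul]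
    _ ≤ α⁻¹ * (Real.exp 1)⁻¹ := mul_le_mul_of_nonneg_left h (by positivity)
    _ = (Real.exp 1 * α)⁻¹ := by rw [mul_inv]; ring

lemma nat_sq_exp_le (α : ℝ) (hα : 0 < α) (n : ℕ) :
    (n : ℝ) ^ 2 * Real.exp (-(α * n)) ≤ 4 / (Real.exp 1 ^ 2 * α ^ 2) := by
  have h := t_exp_le (α * n / 2) (by positivity)
  have hs0 : (0:ℝ) ≤ α * n / 2 * Real.exp (-(α * n / 2)) := by positivity
  have h2 := mul_le_mul h h hs0 (by positivity)
  have hexp : Real.exp (-(α * ↑n / 2)) * Real.exp (-(α * ↑n / 2)) = Real.exp (-(α * ↑n)) := by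
    rw [← Real.exp_add]; congr 1; ring
  have key : (α ^ 2 * (n : ℝ) ^ 2 / 4) * Real.exp (-(α * ↑n)) ≤ 1 / Real.exp 1 ^ 2 := by
    calc (α ^ 2 * (n : ℝ) ^ 2 / 4) * Real.exp (-(α * ↑n))
        = (α * ↑n / 2 * Real.exp (-(α * ↑n / 2))) * (α * ↑n / 2 * Real.exp (-(α * ↑n / 2))) := by
          rw [← hexp]; ring
      _ ≤ (Real.exp 1)⁻¹ * (Real.exp 1)⁻¹ := h2
      _ = 1 / Real.exp 1 ^ 2 := by rw [pow_two, ← mul_inv, one_div]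
  have hα2 : (0:ℝ) < α ^ 2 := by positivity
  calc (n : ℝ) ^ 2 * Real.exp (-(α * n))
      = (4 / α ^ 2) * ((α ^ 2 * (n : ℝ) ^ 2 / 4) * Real.exp (-(α * ↑n))) := by
        field_simp
    _ ≤ (4 / α ^ 2) * (1 / Real.exp 1 ^ 2) := mul_le_mul_of_nonneg_left key (by positivity)
    _ = 4 / (Real.exp 1 ^ 2 * α ^ 2) := by
        rw [div_mul_div_comm]; rw [mul_one]; ring_nf

end Aux

/-- Estimate (3.13): for `ϑ'' < ϑ` and `k ∈ K_{ϑ''}`,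
`‖L^Δ k‖_ϑ ≤ 2((1 + ⟨b⟩e^ϑ)/(e(ϑ-ϑ'')) + 4b̄/(e²(ϑ-ϑ'')²)) ‖k‖_{ϑ''}`;
in particular `L^Δ` maps `K_{ϑ''}` boundedly into `K_ϑ`. -/
theorem LDelta_norm_bound (d : ℕ) (hd : 1 ≤ d) (A : JumpKernel d) (B : RateKernel d)
    (ω : ℝ) (hω : 0 ≤ ω) (ϑ'' ϑ : ℝ) (hϑ : ϑ'' < ϑ)
    (k : CorrFun d) (hk : famNorm d k.k ϑ'' < ⊤) :
    famNorm d (LDelta d A B k.k) ϑ ≤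
      ENNReal.ofReal (2 * ((1 + B.avg * Real.exp ϑ) / (Real.exp 1 * (ϑ - ϑ'')) +
        4 * B.bbar / (Real.exp 1 ^ 2 * (ϑ - ϑ'') ^ 2))) * famNorm d k.k ϑ'' ∧
    famNorm d (LDelta d A B k.k) ϑ < ⊤ := by
  have hα0 : 0 < ϑ - ϑ'' := sub_pos.mpr hϑ
  set c : ℝ := 2 * ((1 + B.avg * Real.exp ϑ) / (Real.exp 1 * (ϑ - ϑ'')) +
      4 * B.bbar / (Real.exp 1 ^ 2 * (ϑ - ϑ'') ^ 2)) with hc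
  have hc0 : 0 ≤ c := by
    rw [hc]
    have h1 : 0 ≤ (1 + B.avg * Real.exp ϑ) / (Real.exp 1 * (ϑ - ϑ'')) := by
      apply div_nonneg
      · have := B.avg_nonneg; positivity
      · positivity
    have h2 : 0 ≤ 4 * B.bbar / (Real.exp 1 ^ 2 * (ϑ - ϑ'') ^ 2) := by
      apply div_nonneg
      · have := B.bbar_nonneg; positivity
      · positivity
    linarith
  set N := famNorm d k.k ϑ'' with hN
  set Nr := N.toReal with hNrdef
  have hNr0 : 0 ≤ Nr := ENNReal.toReal_nonneg
  have hNofReal : ENNReal.ofReal Nr = N := ENNReal.ofReal_toReal hk.ne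
  set M : ℕ → ℝ := fun m => Real.exp (ϑ'' * m) * Nr with hM
  have hM0 : ∀ m, 0 ≤ M m := fun m => mul_nonneg (Real.exp_nonneg _) hNr0
  -- a.e. bound on `k`
  have hae : ∀ m : ℕ, ∀ᵐ y : Fin m → Rd d, |k.k m y| ≤ M m := by
    intro m
    have h1 : ENNReal.ofReal (Real.exp (-ϑ'' * m)) * esssupAbs d m (k.k m) ≤ N := by
      rw [hN, famNorm]
      exact le_iSup (fun m : ℕ =>
        ENNReal.ofReal (Real.exp (-ϑ'' * m)) * esssupAbs d m (k.k m)) m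
    have h2 : esssupAbs d m (k.k m) ≤ ENNReal.ofReal (M m) := by
      have hmul : ENNReal.ofReal (Real.exp (ϑ'' * m)) * ENNReal.ofReal (Real.exp (-ϑ'' * m))
          = 1 := by
        rw [← ENNReal.ofReal_mul (Real.exp_nonneg _), ← Real.exp_add]
        norm_num
      calc esssupAbs d m (k.k m)
          = ENNReal.ofReal (Real.exp (ϑ'' * m)) *
            (ENNReal.ofReal (Real.exp (-ϑ'' * m)) * esssupAbs d m (k.k m)) := by
            rw [← mul_assoc, hmul, one_mul]
        _ ≤ ENNReal.ofReal (Real.exp (ϑ'' * m)) * N := mul_le_mul_right h1 _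
        _ = ENNReal.ofReal (M m) := by
            rw [← hNofReal, ← ENNReal.ofReal_mul (Real.exp_nonneg _), hM]
    have h3 := ae_le_essSup (μ := (volume : Measure (Fin m → Rd d)))
      (fun y : Fin m → Rd d => ENNReal.ofReal |k.k m y|)
    filter_upwards [h3] with y hy
    have h4 : ENNReal.ofReal |k.k m y| ≤ ENNReal.ofReal (M m) := le_trans hy h2
    exact (ENNReal.ofReal_le_ofReal_iff (hM0 m)).mp h4
  -- bad sets
  have hSbm : ∀ m : ℕ, MeasurableSet {y : Fin m → Rd d | M m < |k.k m y|} := fun m =>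
    measurableSet_lt measurable_const (k.measurable m).abs
  have hSb0 : ∀ m : ℕ, (volume : Measure (Fin m → Rd d)) {y | M m < |k.k m y|} = 0 := by
    intro m
    have h := ae_iff.mp (hae m)
    have hEq : {y : Fin m → Rd d | M m < |k.k m y|} = {y | ¬ |k.k m y| ≤ M m} := by
      ext y; simp [not_le]
    rw [hEq]; exact h
  -- a.e. pointwise bound for `LDelta`
  have hQ : ∀ n : ℕ, ∀ᵐ x : Fin n → Rd d, |LDelta d A B k.k n x| ≤
      2 * n * ((1 + n * B.bbar) * M n) + 2 * n * (B.avg * M (n + 1)) := by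
    intro n
    have h1 : ∀ᵐ x : Fin n → Rd d, ∀ i : Fin n, ∀ᵐ x' : Rd d,
        |k.k n (Function.update x i x')| ≤ M n := by
      rw [ae_all_iff]
      intro i
      filter_upwards [ae_update_notMem i (hSbm n) (hSb0 n)] with x hx
      filter_upwards [hx] with x' hx'
      simpa [not_lt] using hx'
    have h2 : ∀ᵐ x : Fin n → Rd d, ∀ i : Fin n, ∀ᵐ x' : Rd d, ∀ᵐ z : Rd d,
        |k.k (n + 1) (Fin.snoc (Function.update x i x') z)| ≤ M (n + 1) := by
      rw [ae_all_iff]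
      intro i
      filter_upwards [ae_update_snoc_notMem i (hSbm (n + 1)) (hSb0 (n + 1))] with x hx
      filter_upwards [hx] with x' hx'
      filter_upwards [hx'] with z hz
      simpa [not_lt] using hz
    have h3 : ∀ᵐ x : Fin n → Rd d, ∀ᵐ z : Rd d,
        |k.k (n + 1) (Fin.snoc x z)| ≤ M (n + 1) := by
      filter_upwards [ae_snoc_notMem (hSbm (n + 1)) (hSb0 (n + 1))] with x hx
      filter_upwards [hx] with z hz
      simpa [not_lt] using hz
    filter_upwards [hae n, h1, h2, h3] with x hx0 hx1 hx2 hx3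
    have eA := estA A B k.k n (M n) (hM0 n) x hx1
    have eB := estB A B k.k n (M n) x hx0
    have eC := estC A B k.k n (M (n + 1)) (hM0 (n + 1)) x hx2
    have eD := estD A B k.k n (M (n + 1)) (hM0 (n + 1)) x hx3
    have habs : |LDelta d A B k.k n x| ≤ |ADelta d A B k.k n x| + |BDelta d A B k.k n x| +
        |CDelta d A B k.k n x| + |DDelta d A B k.k n x| := by
      rw [LDelta]
      calc |ADelta d A B k.k n x + BDelta d A B k.k n x + CDelta d A B k.k n x +
            DDelta d A B k.k n x|
          ≤ |ADelta d A B k.k n x + BDelta d A B k.k n x + CDelta d A B k.k n x| +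
            |DDelta d A B k.k n x| := abs_add_le _ _
        _ ≤ |ADelta d A B k.k n x + BDelta d A B k.k n x| + |CDelta d A B k.k n x| +
            |DDelta d A B k.k n x| := by
            have := abs_add_le (ADelta d A B k.k n x + BDelta d A B k.k n x)
              (CDelta d A B k.k n x)
            linarith
        _ ≤ |ADelta d A B k.k n x| + |BDelta d A B k.k n x| + |CDelta d A B k.k n x| +
            |DDelta d A B k.k n x| := by
            have := abs_add_le (ADelta d A B k.k n x) (BDelta d A B k.k n x)
            linarith
    calc |LDelta d A B k.k n x| ≤ |ADelta d A B k.k n x| + |BDelta d A B k.k n x| +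
          |CDelta d A B k.k n x| + |DDelta d A B k.k n x| := habs
      _ ≤ 2 * n * ((1 + n * B.bbar) * M n) + 2 * n * (B.avg * M (n + 1)) := by linarith
  -- scalar estimate
  have hscalar : ∀ n : ℕ, Real.exp (-ϑ * n) *
      (2 * n * ((1 + n * B.bbar) * M n) + 2 * n * (B.avg * M (n + 1))) ≤ c * Nr := by
    intro n
    set α : ℝ := ϑ - ϑ'' with hαdef
    have hE1 : Real.exp (-ϑ * n) * Real.exp (ϑ'' * n) = Real.exp (-(α * n)) := by
      rw [← Real.exp_add]; congr 1; rw [hαdef]; ring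
    have hE2 : Real.exp (ϑ'' * ((n : ℕ) + 1 : ℕ)) = Real.exp (ϑ'' * n) * Real.exp ϑ'' := by
      rw [← Real.exp_add]; congr 1; push_cast; ring
    have key : Real.exp (-ϑ * n) *
        (2 * n * ((1 + n * B.bbar) * M n) + 2 * n * (B.avg * M (n + 1)))
        = (2 * (1 + B.avg * Real.exp ϑ'') * ((n : ℝ) * Real.exp (-(α * n))) +
           2 * B.bbar * ((n : ℝ) ^ 2 * Real.exp (-(α * n)))) * Nr := by
      rw [hM]
      simp only []
      rw [hE2, ← hE1]
      ring
    rw [key]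
    have k1 := nat_exp_le α hα0 n
    have k2 := nat_sq_exp_le α hα0 n
    have he : Real.exp ϑ'' ≤ Real.exp ϑ := Real.exp_le_exp.mpr hϑ.le
    have hbr : 2 * (1 + B.avg * Real.exp ϑ'') * ((n : ℝ) * Real.exp (-(α * n))) +
        2 * B.bbar * ((n : ℝ) ^ 2 * Real.exp (-(α * n))) ≤
        2 * (1 + B.avg * Real.exp ϑ) * (Real.exp 1 * α)⁻¹ +
        2 * B.bbar * (4 / (Real.exp 1 ^ 2 * α ^ 2)) := by
      have hXn : (0:ℝ) ≤ (n : ℝ) * Real.exp (-(α * n)) := by positivity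
      have hcoef : 0 ≤ 1 + B.avg * Real.exp ϑ'' := by
        have := B.avg_nonneg; positivity
      have hcoef2 : 1 + B.avg * Real.exp ϑ'' ≤ 1 + B.avg * Real.exp ϑ := by
        have := B.avg_nonneg; nlinarith
      have t1 : 2 * (1 + B.avg * Real.exp ϑ'') * ((n : ℝ) * Real.exp (-(α * n))) ≤
          2 * (1 + B.avg * Real.exp ϑ) * (Real.exp 1 * α)⁻¹ := by
        have h1 : 2 * (1 + B.avg * Real.exp ϑ'') * ((n : ℝ) * Real.exp (-(α * n))) ≤
            2 * (1 + B.avg * Real.exp ϑ'') * (Real.exp 1 * α)⁻¹ :=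
          mul_le_mul_of_nonneg_left k1 (by linarith)
        have h2 : 2 * (1 + B.avg * Real.exp ϑ'') * (Real.exp 1 * α)⁻¹ ≤
            2 * (1 + B.avg * Real.exp ϑ) * (Real.exp 1 * α)⁻¹ := by
          apply mul_le_mul_of_nonneg_right _ (by positivity)
          linarith
        linarith
      have t2 : 2 * B.bbar * ((n : ℝ) ^ 2 * Real.exp (-(α * n))) ≤
          2 * B.bbar * (4 / (Real.exp 1 ^ 2 * α ^ 2)) := by
        apply mul_le_mul_of_nonneg_left k2
        have := B.bbar_nonneg; linarith
      linarith
    have hfin : 2 * (1 + B.avg * Real.exp ϑ) * (Real.exp 1 * α)⁻¹ +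
        2 * B.bbar * (4 / (Real.exp 1 ^ 2 * α ^ 2)) = c := by
      rw [hc, hαdef]
      field_simp
    calc (2 * (1 + B.avg * Real.exp ϑ'') * ((n : ℝ) * Real.exp (-(α * n))) +
           2 * B.bbar * ((n : ℝ) ^ 2 * Real.exp (-(α * n)))) * Nr
        ≤ (2 * (1 + B.avg * Real.exp ϑ) * (Real.exp 1 * α)⁻¹ +
           2 * B.bbar * (4 / (Real.exp 1 ^ 2 * α ^ 2))) * Nr :=
          mul_le_mul_of_nonneg_right hbr hNr0
      _ = c * Nr := by rw [hfin]
  -- assemble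
  have hsup : famNorm d (LDelta d A B k.k) ϑ ≤ ENNReal.ofReal c * N := by
    rw [famNorm]
    apply iSup_le
    intro n
    have hb : esssupAbs d n (LDelta d A B k.k n) ≤
        ENNReal.ofReal (2 * n * ((1 + n * B.bbar) * M n) + 2 * n * (B.avg * M (n + 1))) := by
      rw [esssupAbs]
      refine essSup_le_of_ae_le _ ?_
      filter_upwards [hQ n] with x hx
      exact ENNReal.ofReal_le_ofReal hx
    calc ENNReal.ofReal (Real.exp (-ϑ * n)) * esssupAbs d n (LDelta d A B k.k n)
        ≤ ENNReal.ofReal (Real.exp (-ϑ * n)) *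
          ENNReal.ofReal (2 * n * ((1 + n * B.bbar) * M n) + 2 * n * (B.avg * M (n + 1))) :=
          mul_le_mul_right hb _
      _ = ENNReal.ofReal (Real.exp (-ϑ * n) *
          (2 * n * ((1 + n * B.bbar) * M n) + 2 * n * (B.avg * M (n + 1)))) :=
          (ENNReal.ofReal_mul (Real.exp_nonneg _)).symm
      _ ≤ ENNReal.ofReal (c * Nr) := ENNReal.ofReal_le_ofReal (hscalar n)
      _ = ENNReal.ofReal c * ENNReal.ofReal Nr := ENNReal.ofReal_mul hc0
      _ = ENNReal.ofReal c * N := by rw [hNofReal]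
  exact ⟨hsup, lt_of_le_of_lt hsup (ENNReal.mul_lt_top ENNReal.ofReal_lt_top hk)⟩

end Kawasaki
end

section
/- Let d ≥ 1, let a be a jump kernel and b a rate-perturbation kernel, let ω ≥ 0, and assume the stability condition: Φ₊(x₁,…,xₙ) ≤ Φ₋(x₁,…,xₙ) + ω n for all n ≥ 1 and all (x₁,…,xₙ) ∈ (ℝ^d)ⁿ. Let ϑ ∈ ℝ and let G = (G⁽ⁿ⁾)ₙ be a nonnegative correlation-type family with Σ_{n≥1} (1/n!) ∫_{(ℝ^d)ⁿ} Ψ_ω(x₁,…,xₙ) G⁽ⁿ⁾(x₁,…,xₙ) e^{ϑ n} dx₁…dxₙ < ∞. Then |Â G|_ϑ := Σ_{n≥1} (1/n!) ∫_{(ℝ^d)ⁿ} |(Â G)⁽ⁿ⁾(x₁,…,xₙ)| e^{ϑ n} dx₁…dxₙ ≤ Σ_{n≥1} (1/n!) ∫_{(ℝ^d)ⁿ} Ψ_ω(x₁,…,xₙ) G⁽ⁿ⁾(x₁,…,xₙ) e^{ϑ n} dx₁…dxₙ. (The dissipativity estimate (4.4) of the paper, which is the key ingredient of Lemma 4.1.)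 -/
open MeasureTheory ENNReal Real Filter Finset

namespace Kawasaki

/-- The operator `Â` acting componentwise:
`(Â G)⁽ⁿ⁾(x₁,…,xₙ) = Σᵢ ∫ a(xᵢ,y)(1 + Σ_{j≠i} b(xᵢ,y|xⱼ)) G⁽ⁿ⁾(x₁,…,y,…,xₙ) dy`. -/
noncomputable def Ahat (d : ℕ) (A : JumpKernel d) (B : RateKernel d) (G : Fam d) : Fam d :=
  fun n x => ∑ i : Fin n, ∫ y,
    A.a (x i) y * (1 + ∑ j ∈ Finset.univ.erase i, B.b (x i) y (x j)) *
      G n (Function.update x i y)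

/-! ### Auxiliary lemmas -/

lemma ofReal_integral_le_lintegral {α : Type*} [MeasurableSpace α] {μ : Measure α} {f : α → ℝ}
    (hf : ∀ x, 0 ≤ f x) :
    ENNReal.ofReal (∫ x, f x ∂μ) ≤ ∫⁻ x, ENNReal.ofReal (f x) ∂μ := by
  by_cases h : Integrable f μ
  · exact (ofReal_integral_eq_lintegral_ofReal h (Filter.Eventually.of_forall hf)).le
  · simp [integral_undef h]

/-- Triple Tonelli swap of the first and third variables. -/
lemma lintegral_swap13 {α β : Type*} [MeasureSpace α] [MeasureSpace β]
    [SFinite (volume : Measure α)] [SFinite (volume : Measure β)]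
    (K : α → β → α → ℝ≥0∞) (hK : Measurable fun t : α × β × α => K t.1 t.2.1 t.2.2) :
    (∫⁻ u, ∫⁻ r, ∫⁻ y, K u r y) = ∫⁻ u, ∫⁻ r, ∫⁻ y, K y r u := by
  have h1 : ∀ u : α, (∫⁻ r, ∫⁻ y, K u r y) = ∫⁻ y, ∫⁻ r, K u r y := fun u =>
    lintegral_lintegral_swap
      ((hK.comp (measurable_const.prodMk measurable_id)).aemeasurable)
  have h3 : ∀ u : α, (∫⁻ y, ∫⁻ r, K y r u) = ∫⁻ r, ∫⁻ y, K y r u := fun u =>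
    lintegral_lintegral_swap
      ((hK.comp (measurable_fst.prodMk (measurable_snd.prodMk measurable_const))).aemeasurable)
  have hg : Measurable fun p : α × α => ∫⁻ r, K p.1 r p.2 := by
    have : Measurable fun q : (α × α) × β => K q.1.1 q.2 q.1.2 :=
      hK.comp ((measurable_fst.comp measurable_fst).prodMk
        (measurable_snd.prodMk (measurable_snd.comp measurable_fst)))
    exact this.lintegral_prod_right'
  calc (∫⁻ u, ∫⁻ r, ∫⁻ y, K u r y)
      = ∫⁻ u, ∫⁻ y, ∫⁻ r, K u r y := lintegral_congr h1
    _ = ∫⁻ y, ∫⁻ u, ∫⁻ r, K u r y := lintegral_lintegral_swap hg.aemeasurable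
    _ = ∫⁻ u, ∫⁻ r, ∫⁻ y, K y r u := lintegral_congr h3

/-- Swapping the `i`-th coordinate with an extra integration variable preserves the
iterated lower integral. -/
lemma lintegral_update_swap {d m : ℕ} (F : ((Fin (m + 1) → Rd d) × Rd d) → ℝ≥0∞)
    (hF : Measurable F) (i : Fin (m + 1)) :
    (∫⁻ x : Fin (m + 1) → Rd d, ∫⁻ y : Rd d, F (x, y)) =
      ∫⁻ x : Fin (m + 1) → Rd d, ∫⁻ y : Rd d, F (Function.update x i y, x i) := by
  have hmp := (volume_preserving_piFinSuccAbove (fun _ : Fin (m + 1) => Rd d) i).symm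
  have hins : Measurable fun p : Rd d × (Fin m → Rd d) =>
      (i.insertNth p.1 p.2 : Fin (m + 1) → Rd d) := by
    have h := (MeasurableEquiv.piFinSuccAbove (fun _ : Fin (m + 1) => Rd d) i).symm.measurable
    exact h
  have key : ∀ Fn : (Fin (m + 1) → Rd d) → ℝ≥0∞, Measurable Fn →
      (∫⁻ x, Fn x) = ∫⁻ p : Rd d × (Fin m → Rd d), Fn (i.insertNth p.1 p.2) := by
    intro Fn hFn
    rw [← hmp.lintegral_comp hFn]
    exact lintegral_congr fun p => rfl
  have hupd : Measurable fun q : (Fin (m + 1) → Rd d) × Rd d => Function.update q.1 i q.2 := by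
    refine measurable_pi_lambda _ fun j => ?_
    simp only [Function.update_apply]
    split_ifs
    · exact measurable_snd
    · exact (measurable_pi_apply j).comp measurable_fst
  have hK : Measurable fun t : Rd d × (Fin m → Rd d) × Rd d =>
      F (i.insertNth t.1 t.2.1, t.2.2) :=
    hF.comp ((hins.comp (measurable_fst.prodMk (measurable_fst.comp measurable_snd))).prodMk
      (measurable_snd.comp measurable_snd))
  have hK1 : Measurable fun q : (Rd d × (Fin m → Rd d)) × Rd d =>
      F (i.insertNth q.1.1 q.1.2, q.2) :=
    hF.comp ((hins.comp measurable_fst).prodMk measurable_snd)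
  have hK2 : Measurable fun q : (Rd d × (Fin m → Rd d)) × Rd d =>
      F (i.insertNth q.2 q.1.2, q.1.1) :=
    hF.comp ((hins.comp (measurable_snd.prodMk (measurable_snd.comp measurable_fst))).prodMk
      (measurable_fst.comp measurable_fst))
  calc (∫⁻ x, ∫⁻ y, F (x, y))
      = ∫⁻ p : Rd d × (Fin m → Rd d), ∫⁻ y, F (i.insertNth p.1 p.2, y) :=
        key _ hF.lintegral_prod_right'
    _ = ∫⁻ u, ∫⁻ r, ∫⁻ y, F (i.insertNth u r, y) := by
        rw [Measure.volume_eq_prod, lintegral_prod _ hK1.lintegral_prod_right'.aemeasurable]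
    _ = ∫⁻ u, ∫⁻ r, ∫⁻ y, F (i.insertNth y r, u) :=
        lintegral_swap13 (fun u r y => F (i.insertNth u r, y)) hK
    _ = ∫⁻ p : Rd d × (Fin m → Rd d), ∫⁻ y, F (i.insertNth y p.2, p.1) := by
        rw [Measure.volume_eq_prod, lintegral_prod _ hK2.lintegral_prod_right'.aemeasurable]
    _ = ∫⁻ x, ∫⁻ y, F (Function.update x i y, x i) := by
        rw [key (fun x => ∫⁻ y, F (Function.update x i y, x i))
          ((hF.comp (hupd.prodMk ((measurable_pi_apply i).comp
            measurable_fst))).lintegral_prod_right')]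
        refine lintegral_congr fun p => lintegral_congr fun y => ?_
        rw [Fin.update_insertNth, Fin.insertNth_apply_same]

/-- The basic estimate for a fixed number of particles. -/
lemma key_bound (d : ℕ) (A : JumpKernel d) (B : RateKernel d) (ω : ℝ)
    (G : CorrFun d) (hGpos : ∀ n x, 0 ≤ G.k n x) (m : ℕ)
    (hstab : ∀ x : Fin (m + 1) → Rd d,
      PhiPlus d A B (m + 1) x ≤ PhiMinus d A B (m + 1) x + ω * ((m : ℝ) + 1))
    (E : ℝ) (hE : 0 < E) :
    (∫⁻ x : Fin (m + 1) → Rd d, ENNReal.ofReal (|Ahat d A B G.k (m + 1) x| * E)) ≤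
      ∫⁻ x : Fin (m + 1) → Rd d,
        ENNReal.ofReal ((Psi d A B (m + 1) x + ω * ((m : ℝ) + 1)) * G.k (m + 1) x * E) := by
  -- the integrand of `Ahat` multiplied by `E`, as a function on the product space
  set g : Fin (m + 1) → ((Fin (m + 1) → Rd d) × Rd d) → ℝ := fun i p =>
    A.a (p.1 i) p.2 * (1 + ∑ j ∈ Finset.univ.erase i, B.b (p.1 i) p.2 (p.1 j)) *
      (G.k (m + 1) (Function.update p.1 i p.2) * E) with hg_def
  have hb1 : ∀ (u v : Rd d) (x : Fin (m + 1) → Rd d) (i : Fin (m + 1)),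
      0 ≤ 1 + ∑ j ∈ Finset.univ.erase i, B.b u v (x j) := fun u v x i =>
    add_nonneg zero_le_one (Finset.sum_nonneg fun j _ => B.nonneg _ _ _)
  have hg0 : ∀ i p, 0 ≤ g i p := fun i p =>
    mul_nonneg (mul_nonneg (A.nonneg _ _) (hb1 _ _ _ _))
      (mul_nonneg (hGpos _ _) hE.le)
  have hupd : ∀ i : Fin (m + 1),
      Measurable fun q : (Fin (m + 1) → Rd d) × Rd d => Function.update q.1 i q.2 := by
    intro i
    refine measurable_pi_lambda _ fun j => ?_
    simp only [Function.update_apply]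
    split_ifs
    · exact measurable_snd
    · exact (measurable_pi_apply j).comp measurable_fst
  have hgmeas : ∀ i : Fin (m + 1), Measurable fun p => ENNReal.ofReal (g i p) := by
    intro i
    have hpair : Measurable fun p : (Fin (m + 1) → Rd d) × Rd d => (p.1 i, p.2) :=
      ((measurable_pi_apply i).comp measurable_fst).prodMk measurable_snd
    have ha2 : Measurable fun p : (Fin (m + 1) → Rd d) × Rd d => A.a (p.1 i) p.2 :=
      A.measurable.comp hpair
    have hb2 : ∀ j : Fin (m + 1),
        Measurable fun p : (Fin (m + 1) → Rd d) × Rd d => B.b (p.1 i) p.2 (p.1 j) := by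
      intro j
      have htr : Measurable fun p : (Fin (m + 1) → Rd d) × Rd d => (p.1 i, p.2, p.1 j) :=
        ((measurable_pi_apply i).comp measurable_fst).prodMk
          (measurable_snd.prodMk ((measurable_pi_apply j).comp measurable_fst))
      exact B.measurable.comp htr
    exact ((ha2.mul (measurable_const.add
      (Finset.measurable_sum _ fun j _ => hb2 j))).mul
      (((G.measurable (m + 1)).comp (hupd i)).mul measurable_const)).ennreal_ofReal
  -- Step A : pointwise bound by the sum of lower integrals
  have stepA : ∀ x : Fin (m + 1) → Rd d,
      ENNReal.ofReal (|Ahat d A B G.k (m + 1) x| * E) ≤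
        ∑ i : Fin (m + 1), ∫⁻ y, ENNReal.ofReal (g i (x, y)) := by
    intro x
    have hI : ∀ i : Fin (m + 1), 0 ≤ ∫ y, A.a (x i) y *
        (1 + ∑ j ∈ Finset.univ.erase i, B.b (x i) y (x j)) *
          G.k (m + 1) (Function.update x i y) := fun i =>
      integral_nonneg fun y =>
        mul_nonneg (mul_nonneg (A.nonneg _ _) (hb1 _ _ _ _)) (hGpos _ _)
    have habs : |Ahat d A B G.k (m + 1) x| = Ahat d A B G.k (m + 1) x :=
      abs_of_nonneg (Finset.sum_nonneg fun i _ => hI i)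
    have hsplit : Ahat d A B G.k (m + 1) x * E = ∑ i : Fin (m + 1), ∫ y, g i (x, y) := by
      rw [Ahat, Finset.sum_mul]
      refine Finset.sum_congr rfl fun i _ => ?_
      rw [← integral_mul_const]
      congr 1
      funext y
      simp only [hg_def]
      ring
    rw [habs, hsplit,
      ENNReal.ofReal_sum_of_nonneg fun i _ => integral_nonneg fun y => hg0 i (x, y)]
    exact Finset.sum_le_sum fun i _ => ofReal_integral_le_lintegral fun y => hg0 i (x, y)
  -- value of `g i` after the coordinate swap
  have hsimp : ∀ (i : Fin (m + 1)) (x : Fin (m + 1) → Rd d) (y : Rd d),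
      g i (Function.update x i y, x i) =
        A.a y (x i) * (1 + ∑ j ∈ Finset.univ.erase i, B.b y (x i) (x j)) *
          (G.k (m + 1) x * E) := by
    intro i x y
    simp only [hg_def, Function.update_self, Function.update_idem, Function.update_eq_self]
    congr 3
    refine Finset.sum_congr rfl fun j hj => ?_
    rw [Function.update_of_ne (Finset.ne_of_mem_erase hj)]
  -- basic bounds on `b`
  have hbbar : ∀ p q r : Rd d, B.b p q r ≤ B.bbar := fun p q r =>
    le_ciSup B.bddAbove (p, (q, r))
  -- integrability of products
  have ameas : ∀ X : Rd d, Measurable fun y => A.a y X := by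
    intro X
    have hpr : Measurable fun y : Rd d => (y, X) := measurable_id.prodMk measurable_const
    exact A.measurable.comp hpr
  have bmeas : ∀ X z : Rd d, Measurable fun y => B.b y X z := by
    intro X z
    have hpr : Measurable fun y : Rd d => (y, (X, z)) := measurable_id.prodMk measurable_const
    exact B.measurable.comp hpr
  have habint : ∀ X z : Rd d, Integrable fun y => A.a y X * B.b y X z := by
    intro X z
    refine ((A.integrable X).const_mul B.bbar).mono'
      ((ameas X).mul (bmeas X z)).aestronglyMeasurable (Filter.Eventually.of_forall fun y => ?_)
    rw [Real.norm_eq_abs, abs_of_nonneg (mul_nonneg (A.nonneg _ _) (B.nonneg _ _ _))]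
    calc A.a y X * B.b y X z ≤ A.a y X * B.bbar :=
          mul_le_mul_of_nonneg_left (hbbar _ _ _) (A.nonneg _ _)
      _ = B.bbar * A.a y X := mul_comm _ _
  -- Step E : pointwise bound after the swap
  have stepE : ∀ x : Fin (m + 1) → Rd d,
      (∑ i : Fin (m + 1), ∫⁻ y, ENNReal.ofReal (g i (Function.update x i y, x i))) ≤
        ENNReal.ofReal ((Psi d A B (m + 1) x + ω * ((m : ℝ) + 1)) * G.k (m + 1) x * E) := by
    intro x
    have hexp : ∀ i : Fin (m + 1), (fun y => A.a y (x i) *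
        (1 + ∑ j ∈ Finset.univ.erase i, B.b y (x i) (x j))) =
        fun y => A.a y (x i) + ∑ j ∈ Finset.univ.erase i, A.a y (x i) * B.b y (x i) (x j) := by
      intro i; funext y; rw [mul_add, mul_one, Finset.mul_sum]
    have hcint : ∀ i : Fin (m + 1), Integrable fun y => A.a y (x i) *
        (1 + ∑ j ∈ Finset.univ.erase i, B.b y (x i) (x j)) := by
      intro i
      rw [hexp i]
      exact (A.integrable (x i)).add
        (integrable_finset_sum _ fun j _ => habint (x i) (x j))
    have hval : ∀ i : Fin (m + 1), (∫ y, A.a y (x i) *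
        (1 + ∑ j ∈ Finset.univ.erase i, B.b y (x i) (x j))) =
        (∫ y, A.a (x i) y) + ∑ j ∈ Finset.univ.erase i, phiPlus d A B (x i) (x j) := by
      intro i
      rw [hexp i, integral_add (A.integrable (x i))
        (integrable_finset_sum _ fun j _ => habint (x i) (x j)),
        integral_finset_sum _ fun j _ => habint (x i) (x j)]
      congr 1
      rw [show (fun y => A.a y (x i)) = fun y => A.a (x i) y from
        funext fun y => A.symm y (x i)]
    have hS0 : ∀ i : Fin (m + 1), 0 ≤ (∫ y, A.a (x i) y) +
        ∑ j ∈ Finset.univ.erase i, phiPlus d A B (x i) (x j) := fun i =>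
      add_nonneg (integral_nonneg fun y => A.nonneg _ _)
        (Finset.sum_nonneg fun j _ => integral_nonneg fun z =>
          mul_nonneg (A.nonneg _ _) (B.nonneg _ _ _))
    have hinner : ∀ i : Fin (m + 1),
        (∫⁻ y, ENNReal.ofReal (g i (Function.update x i y, x i))) =
          ENNReal.ofReal ((∫ y, A.a (x i) y) +
            ∑ j ∈ Finset.univ.erase i, phiPlus d A B (x i) (x j)) *
            ENNReal.ofReal (G.k (m + 1) x * E) := by
      intro i
      simp only [hsimp]
      have hac0 : ∀ y : Rd d, 0 ≤ A.a y (x i) *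
          (1 + ∑ j ∈ Finset.univ.erase i, B.b y (x i) (x j)) := fun y =>
        mul_nonneg (A.nonneg _ _) (hb1 _ _ _ _)
      have hmeasac : Measurable fun y => ENNReal.ofReal (A.a y (x i) *
          (1 + ∑ j ∈ Finset.univ.erase i, B.b y (x i) (x j))) :=
        ((ameas (x i)).mul (measurable_const.add
          (Finset.measurable_sum _ fun j _ => bmeas (x i) (x j)))).ennreal_ofReal
      calc (∫⁻ y, ENNReal.ofReal (A.a y (x i) *
              (1 + ∑ j ∈ Finset.univ.erase i, B.b y (x i) (x j)) * (G.k (m + 1) x * E)))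
          = ∫⁻ y, ENNReal.ofReal (A.a y (x i) *
              (1 + ∑ j ∈ Finset.univ.erase i, B.b y (x i) (x j))) *
              ENNReal.ofReal (G.k (m + 1) x * E) := by
            exact lintegral_congr fun y => ENNReal.ofReal_mul (hac0 y)
        _ = (∫⁻ y, ENNReal.ofReal (A.a y (x i) *
              (1 + ∑ j ∈ Finset.univ.erase i, B.b y (x i) (x j)))) *
              ENNReal.ofReal (G.k (m + 1) x * E) :=
            lintegral_mul_const'' _ hmeasac.aemeasurable
        _ = ENNReal.ofReal ((∫ y, A.a (x i) y) +
              ∑ j ∈ Finset.univ.erase i, phiPlus d A B (x i) (x j)) *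
              ENNReal.ofReal (G.k (m + 1) x * E) := by
            rw [← ofReal_integral_eq_lintegral_ofReal (hcint i)
              (Filter.Eventually.of_forall hac0), hval i]
    rw [Finset.sum_congr rfl fun i _ => hinner i, ← Finset.sum_mul,
      ← ENNReal.ofReal_sum_of_nonneg fun i _ => hS0 i]
    have hsum : (∑ i : Fin (m + 1), ((∫ y, A.a (x i) y) +
        ∑ j ∈ Finset.univ.erase i, phiPlus d A B (x i) (x j))) =
        (∑ i : Fin (m + 1), ∫ y, A.a (x i) y) + PhiPlus d A B (m + 1) x := by
      rw [Finset.sum_add_distrib]; rfl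
    have hle : (∑ i : Fin (m + 1), ((∫ y, A.a (x i) y) +
        ∑ j ∈ Finset.univ.erase i, phiPlus d A B (x i) (x j))) ≤
        Psi d A B (m + 1) x + ω * ((m : ℝ) + 1) := by
      rw [hsum, Psi]
      have := hstab x
      linarith
    have hG0 : 0 ≤ G.k (m + 1) x * E := mul_nonneg (hGpos _ _) hE.le
    calc ENNReal.ofReal (∑ i : Fin (m + 1), ((∫ y, A.a (x i) y) +
            ∑ j ∈ Finset.univ.erase i, phiPlus d A B (x i) (x j))) *
          ENNReal.ofReal (G.k (m + 1) x * E)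
        ≤ ENNReal.ofReal (Psi d A B (m + 1) x + ω * ((m : ℝ) + 1)) *
          ENNReal.ofReal (G.k (m + 1) x * E) :=
          mul_le_mul_left (ENNReal.ofReal_le_ofReal hle) _
      _ = ENNReal.ofReal ((Psi d A B (m + 1) x + ω * ((m : ℝ) + 1)) * G.k (m + 1) x * E) := by
          rw [mul_assoc, ← ENNReal.ofReal_mul (le_trans (Finset.sum_nonneg
            fun i _ => hS0 i) hle)]
  -- put everything together
  calc (∫⁻ x : Fin (m + 1) → Rd d, ENNReal.ofReal (|Ahat d A B G.k (m + 1) x| * E))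
      ≤ ∫⁻ x, ∑ i : Fin (m + 1), ∫⁻ y, ENNReal.ofReal (g i (x, y)) := lintegral_mono stepA
    _ = ∑ i : Fin (m + 1), ∫⁻ x, ∫⁻ y, ENNReal.ofReal (g i (x, y)) :=
        lintegral_finset_sum _ fun i _ => (hgmeas i).lintegral_prod_right'
    _ = ∑ i : Fin (m + 1), ∫⁻ x, ∫⁻ y,
          ENNReal.ofReal (g i (Function.update x i y, x i)) :=
        Finset.sum_congr rfl fun i _ =>
          lintegral_update_swap (fun p => ENNReal.ofReal (g i p)) (hgmeas i) i
    _ = ∫⁻ x, ∑ i : Fin (m + 1), ∫⁻ y,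
          ENNReal.ofReal (g i (Function.update x i y, x i)) :=
        (lintegral_finset_sum _ fun i _ =>
          ((hgmeas i).comp ((hupd i).prodMk
            ((measurable_pi_apply i).comp measurable_fst))).lintegral_prod_right').symm
    _ ≤ _ := lintegral_mono stepE

/-- The dissipativity estimate (4.4): under the stability condition
`Φ₊ ≤ Φ₋ + ωn`, for every nonnegative correlation-type family `G` with
`Σ_{n≥1} (1/n!) ∫ Ψ_ω G⁽ⁿ⁾ e^{ϑn} < ∞` one has
`|Â G|_ϑ = Σ_{n≥1} (1/n!) ∫ |(Â G)⁽ⁿ⁾| e^{ϑn} ≤ Σ_{n≥1} (1/n!) ∫ Ψ_ω G⁽ⁿ⁾ e^{ϑn}`. -/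
theorem Ahat_dissipative (d : ℕ) (hd : 1 ≤ d) (A : JumpKernel d) (B : RateKernel d)
    (ω : ℝ) (hω : 0 ≤ ω)
    (hstab : ∀ n : ℕ, 1 ≤ n → ∀ x : Fin n → Rd d,
      PhiPlus d A B n x ≤ PhiMinus d A B n x + ω * n)
    (ϑ : ℝ) (G : CorrFun d) (hGpos : ∀ n x, 0 ≤ G.k n x)
    (hGfin : (∑' n : ℕ, ((n + 1).factorial : ℝ≥0∞)⁻¹ *
        ∫⁻ x : Fin (n + 1) → Rd d,
          ENNReal.ofReal ((Psi d A B (n + 1) x + ω * (n + 1)) * G.k (n + 1) x *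
            Real.exp (ϑ * (n + 1)))) < ⊤) :
    (∑' n : ℕ, ((n + 1).factorial : ℝ≥0∞)⁻¹ *
        ∫⁻ x : Fin (n + 1) → Rd d,
          ENNReal.ofReal (|Ahat d A B G.k (n + 1) x| * Real.exp (ϑ * (n + 1)))) ≤
      ∑' n : ℕ, ((n + 1).factorial : ℝ≥0∞)⁻¹ *
        ∫⁻ x : Fin (n + 1) → Rd d,
          ENNReal.ofReal ((Psi d A B (n + 1) x + ω * (n + 1)) * G.k (n + 1) x *
            Real.exp (ϑ * (n + 1))) := by
  refine ENNReal.tsum_le_tsum fun m => mul_le_mul_right ?_ _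
  refine key_bound d A B ω G hGpos m (fun x => ?_) _ (Real.exp_pos _)
  have h := hstab (m + 1) (Nat.le_add_left 1 m) x
  push_cast at h
  exact h

end Kawasaki
end

section
/- Sufficient condition for the stability assumption (condition (3.22) of the paper implies assumption (2.11)): Let d ≥ 1 and let α, κ₁, κ₂ : ℝ^d → [0,∞) be continuous, bounded, integrable, even functions with ∫ α = 1. Define a(x,y) := α(x−y), b(x,y|z) := κ₁(x−z) + κ₂(y−z), φ₊(x,y) := (α∗κ₁)(x−y) + κ₂(x−y), φ₋(x,y) := κ₁(x−y) + (α∗κ₂)(x−y), and Φ±(x₁,…,xₙ) := Σ_{i=1}^n Σ_{j≠i} φ±(x_i,x_j). Assume that (1 − α̂(p)) (κ̂₁(p) − κ̂₂(p)) ≥ 0 for all p ∈ ℝ^d, where f̂(p) := ∫ f(x) e^{i⟨p,x⟩} dx. Then ω := κ₁(0) − (α∗κ₁)(0) + (α∗κ₂)(0) − κ₂(0) satisfies ω ≥ 0 and Φ₊(x₁,…,xₙ) ≤ Φ₋(x₁,…,xₙ) + ω n for all n ≥ 1 and all (x₁,…,xₙ) ∈ (ℝ^d)ⁿ. -/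
open MeasureTheory Real Finset

namespace Kawasaki

/-- Convolution `(f ∗ g)(u) = ∫ f(u - v) g(v) dv`. -/
noncomputable def conv (d : ℕ) (f g : Rd d → ℝ) (u : Rd d) : ℝ :=
  ∫ v, f (u - v) * g v

/-- The Fourier transform `f̂(p) = ∫ f(x) e^{i⟨p,x⟩} dx` of an even real-valued
integrable function is real-valued and equals `∫ f(x) cos⟨p,x⟩ dx`. -/
noncomputable def fourierEven (d : ℕ) (f : Rd d → ℝ) (p : Rd d) : ℝ :=
  ∫ x, f x * Real.cos (∑ i, p i * x i)

variable {d : ℕ}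

lemma cont_ip (y : Rd d) : Continuous fun p : Rd d => ∑ i, p i * y i :=
  continuous_finset_sum _ fun i _ => (continuous_apply i).mul continuous_const

lemma cont_ip' (p : Rd d) : Continuous fun x : Rd d => ∑ i, p i * x i :=
  continuous_finset_sum _ fun i _ => continuous_const.mul (continuous_apply i)

lemma integrable_mul_bdd {f : Rd d → ℝ} (hf : Integrable f) {c : Rd d → ℝ}
    (hc : Continuous c) (hb : ∀ x, |c x| ≤ 1) :
    Integrable fun x => f x * c x := by
  have := hf.bdd_mul hc.aestronglyMeasurable (c := 1) (.of_forall fun x => by simpa using hb x)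
  simpa [mul_comm] using this

lemma integrable_mul_cos {f : Rd d → ℝ} (hf : Integrable f) {c : Rd d → ℝ} (hc : Continuous c) :
    Integrable fun x => f x * Real.cos (c x) :=
  integrable_mul_bdd hf (Real.continuous_cos.comp hc) fun x => Real.abs_cos_le_one _

lemma integrable_mul_sin {f : Rd d → ℝ} (hf : Integrable f) {c : Rd d → ℝ} (hc : Continuous c) :
    Integrable fun x => f x * Real.sin (c x) :=
  integrable_mul_bdd hf (Real.continuous_sin.comp hc) fun x => Real.abs_sin_le_one _

lemma abs_fourierEven_le {f : Rd d → ℝ} (hf : Integrable f) (p : Rd d) :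
    |fourierEven d f p| ≤ ∫ x, |f x| := by
  rw [fourierEven, ← Real.norm_eq_abs]
  refine (norm_integral_le_integral_norm _).trans ?_
  refine integral_mono_of_nonneg (.of_forall fun x => norm_nonneg _) hf.abs (.of_forall fun x => ?_)
  simp only [Real.norm_eq_abs, abs_mul]
  exact mul_le_of_le_one_right (abs_nonneg _) (Real.abs_cos_le_one _)

lemma continuous_fourierEven {f : Rd d → ℝ} (hf : Integrable f) :
    Continuous (fourierEven d f) := by
  rw [continuous_iff_continuousAt]
  intro p₀
  apply continuousAt_of_dominated (bound := fun x => |f x|)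
  · exact .of_forall fun p => (integrable_mul_cos hf (cont_ip' p)).aestronglyMeasurable
  · exact .of_forall fun p => .of_forall fun x => by
      rw [Real.norm_eq_abs, abs_mul]
      exact mul_le_of_le_one_right (abs_nonneg _) (Real.abs_cos_le_one _)
  · exact hf.abs
  · exact .of_forall fun x =>
      (continuous_const.mul (Real.continuous_cos.comp (cont_ip x))).continuousAt

lemma integral_even_mul_sin {f : Rd d → ℝ} (hf : ∀ x, f x = f (-x)) (p : Rd d) :
    ∫ x, f x * Real.sin (∑ i, p i * x i) = 0 := by
  have h : ∫ x, f x * Real.sin (∑ i, p i * x i)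
      = - ∫ x, f x * Real.sin (∑ i, p i * x i) := by
    conv_lhs => rw [← integral_neg_eq_self (fun x => f x * Real.sin (∑ i, p i * x i)) volume]
    rw [← integral_neg]
    congr 1 with x
    rw [← hf x]
    simp [mul_comm, mul_neg, Finset.sum_neg_distrib]
  linarith

lemma integrable_kernel {α κ : Rd d → ℝ} (hα : Integrable α) (hκ : Integrable κ) :
    Integrable (fun q : Rd d × Rd d => α (q.1 - q.2) * κ q.2)
      ((volume : Measure (Rd d)).prod volume) := by
  have h1 : Integrable (fun r : Rd d × Rd d => α r.1 * κ r.2)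
      ((volume : Measure (Rd d)).prod volume) := hα.mul_prod hκ
  have hT := measurePreserving_sub_prod (volume : Measure (Rd d)) volume
  exact (hT.integrable_comp h1.aestronglyMeasurable).2 h1

lemma integrable_conv {α κ : Rd d → ℝ} (hα : Integrable α) (hκ : Integrable κ) :
    Integrable (conv d α κ) :=
  (integrable_kernel hα hκ).integral_prod_left

lemma integrable_conv_integrand {α κ : Rd d → ℝ} (hα : Integrable α) {Mκ : ℝ}
    (hκc : Continuous κ) (hκb : ∀ x, |κ x| ≤ Mκ) (u : Rd d) :
    Integrable fun v => α (u - v) * κ v := by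
  have h1 : Integrable fun v => α (u - v) := hα.comp_sub_left u
  have := h1.bdd_mul hκc.aestronglyMeasurable (c := Mκ) (.of_forall fun x => by simpa using hκb x)
  simpa [mul_comm] using this

lemma continuous_conv {α κ : Rd d → ℝ} (hαc : Continuous α) {Mα : ℝ} (hMα : ∀ x, |α x| ≤ Mα)
    (hκ : Integrable κ) (hκc : Continuous κ) : Continuous (conv d α κ) := by
  rw [continuous_iff_continuousAt]; intro u₀
  apply continuousAt_of_dominated (bound := fun v => Mα * |κ v|)
  · exact .of_forall fun u =>
      ((hαc.comp (continuous_const.sub continuous_id)).mul hκc).aestronglyMeasurable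
  · exact .of_forall fun u => .of_forall fun v => by
      simp only [Real.norm_eq_abs, abs_mul]
      exact mul_le_mul_of_nonneg_right (hMα _) (abs_nonneg _)
  · exact hκ.abs.const_mul Mα
  · exact .of_forall fun v =>
      ((hαc.comp (continuous_id.sub continuous_const)).mul continuous_const).continuousAt

lemma conv_nonneg {α κ : Rd d → ℝ} (hαp : ∀ x, 0 ≤ α x) (hκp : ∀ x, 0 ≤ κ x) (u : Rd d) :
    0 ≤ conv d α κ u :=
  integral_nonneg fun v => mul_nonneg (hαp _) (hκp _)

lemma conv_le {α κ : Rd d → ℝ} (hα : Integrable α) (hα1 : (∫ x, α x) = 1)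
    (hαp : ∀ x, 0 ≤ α x) {Mκ : ℝ} (hκc : Continuous κ)
    (hκp : ∀ x, 0 ≤ κ x) (hκb : ∀ x, κ x ≤ Mκ) (u : Rd d) :
    conv d α κ u ≤ Mκ := by
  have habs : ∀ x, |κ x| ≤ Mκ := fun x => by rw [abs_of_nonneg (hκp x)]; exact hκb x
  have h1 : Integrable fun v => α (u - v) * κ v := integrable_conv_integrand hα hκc habs u
  have h2 : Integrable fun v => α (u - v) * Mκ := (hα.comp_sub_left u).mul_const Mκ
  have : conv d α κ u ≤ ∫ v, α (u - v) * Mκ := by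
    refine integral_mono h1 h2 fun v => ?_
    exact mul_le_mul_of_nonneg_left (hκb v) (hαp _)
  calc conv d α κ u ≤ ∫ v, α (u - v) * Mκ := this
    _ = (∫ v, α (u - v)) * Mκ := integral_mul_const Mκ _
    _ = Mκ := by rw [integral_sub_left_eq_self α volume u, hα1, one_mul]

lemma conv_even {α κ : Rd d → ℝ} (hαe : ∀ x, α x = α (-x)) (hκe : ∀ x, κ x = κ (-x))
    (u : Rd d) : conv d α κ (-u) = conv d α κ u := by
  unfold conv
  rw [← integral_neg_eq_self (fun v => α (-u - v) * κ v) volume]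
  congr 1 with v
  rw [show -u - -v = -(u - v) by abel, ← hαe (u - v), ← hκe v]

lemma integral_shift_cos {α : Rd d → ℝ} (hα : Integrable α) (hαe : ∀ x, α x = α (-x))
    (p v : Rd d) :
    ∫ u, α (u - v) * Real.cos (∑ i, p i * u i)
      = fourierEven d α p * Real.cos (∑ i, p i * v i) := by
  rw [← integral_add_right_eq_self (μ := volume)
    (fun u => α (u - v) * Real.cos (∑ i, p i * u i)) v]
  have : ∀ u : Rd d, α (u + v - v) * Real.cos (∑ i, p i * (u + v) i)
      = α u * Real.cos (∑ i, p i * u i) * Real.cos (∑ i, p i * v i)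
        - α u * Real.sin (∑ i, p i * u i) * Real.sin (∑ i, p i * v i) := by
    intro u
    have h1 : u + v - v = u := add_sub_cancel_right u v
    have h2 : (∑ i, p i * (u + v) i) = (∑ i, p i * u i) + (∑ i, p i * v i) := by
      rw [← Finset.sum_add_distrib]
      exact Finset.sum_congr rfl fun i _ => by simp [Pi.add_apply, mul_add]
    rw [h1, h2, Real.cos_add]; ring
  simp_rw [this]
  rw [integral_sub (by
      have := integrable_mul_cos hα (cont_ip' p)
      exact this.mul_const _)
    (by
      have := integrable_mul_sin hα (cont_ip' p)
      exact this.mul_const _)]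
  rw [integral_mul_const, integral_mul_const, integral_even_mul_sin hαe p]
  simp [fourierEven]

lemma fourierEven_conv {α κ : Rd d → ℝ} (hα : Integrable α) (hκ : Integrable κ)
    (hαe : ∀ x, α x = α (-x)) {Mκ : ℝ} (hκc : Continuous κ) (hκb : ∀ x, |κ x| ≤ Mκ)
    (p : Rd d) :
    fourierEven d (conv d α κ) p = fourierEven d α p * fourierEven d κ p := by
  have hker : Integrable (fun q : Rd d × Rd d =>
      α (q.1 - q.2) * κ q.2 * Real.cos (∑ i, p i * q.1 i))
      ((volume : Measure (Rd d)).prod volume) := by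
    have h0 := integrable_kernel hα hκ
    have := h0.bdd_mul ((Real.continuous_cos.comp
      ((cont_ip' p).comp continuous_fst)).aestronglyMeasurable)
      (c := 1) (.of_forall fun q => by simpa using Real.abs_cos_le_one _)
    exact this.congr (Filter.Eventually.of_forall fun q => by
      simp only [Function.comp_apply]; ring)
  calc fourierEven d (conv d α κ) p
      = ∫ u, ∫ v, α (u - v) * κ v * Real.cos (∑ i, p i * u i) := by
        unfold fourierEven conv
        congr 1 with u
        rw [← integral_mul_const]
    _ = ∫ v, ∫ u, α (u - v) * κ v * Real.cos (∑ i, p i * u i) := integral_integral_swap hker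
    _ = ∫ v, κ v * (fourierEven d α p * Real.cos (∑ i, p i * v i)) := by
        congr 1 with v
        rw [← integral_shift_cos hα hαe p v, ← integral_const_mul]
        congr 1 with u
        ring
    _ = fourierEven d α p * fourierEven d κ p := by
        unfold fourierEven
        rw [← integral_const_mul]
        congr 1 with v
        ring

lemma integrable_gauss {t : ℝ} (ht : 0 < t) :
    Integrable fun p : Rd d => Real.exp (-t * ∑ i, p i ^ 2) := by
  have h : ∀ p : Rd d, Real.exp (-t * ∑ i, p i ^ 2) = ∏ i, Real.exp (-t * p i ^ 2) := by
    intro p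
    rw [← Real.exp_sum, Finset.mul_sum]
  simp_rw [h]
  exact Integrable.fintype_prod (f := fun _ (x : ℝ) => Real.exp (-t * x ^ 2))
    fun _ => integrable_exp_neg_mul_sq ht

lemma gauss_cos {t : ℝ} (ht : 0 < t) (z : Rd d) :
    ∫ p : Rd d, Real.exp (-t * ∑ i, p i ^ 2) * Real.cos (∑ i, p i * z i)
      = (π / t) ^ ((d : ℝ) / 2) * Real.exp (-(∑ i, z i ^ 2) / (4 * t)) := by
  have htc : 0 < (t : ℂ).re := by simpa using ht
  have hint := GaussianFourier.integrable_cexp_neg_mul_sum_add (ι := Fin d) htc (fun i => Complex.I * z i)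
  have key := GaussianFourier.integral_cexp_neg_mul_sum_add (ι := Fin d) htc (fun i => Complex.I * z i)
  have hre : ∀ v : Rd d,
      (Complex.exp (-(t:ℂ) * ∑ i, (v i : ℂ) ^ 2 + ∑ i, (Complex.I * z i) * v i)).re
        = Real.exp (-t * ∑ i, v i ^ 2) * Real.cos (∑ i, v i * z i) := by
    intro v
    have hw : (-(t:ℂ) * ∑ i, (v i : ℂ) ^ 2 + ∑ i, (Complex.I * z i) * v i)
        = Complex.ofReal (-t * ∑ i, v i ^ 2)
          + Complex.ofReal (∑ i, v i * z i) * Complex.I := by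
      push_cast
      rw [Finset.sum_mul]
      congr 1
      exact Finset.sum_congr rfl fun i _ => by ring
    rw [hw, Complex.exp_re]
    simp [← Complex.ofReal_pow]
  have h1 : (∫ v : Rd d, Real.exp (-t * ∑ i, v i ^ 2) * Real.cos (∑ i, v i * z i))
      = (∫ v : Rd d, Complex.exp (-(t:ℂ) * ∑ i, (v i : ℂ) ^ 2
          + ∑ i, (Complex.I * z i) * v i)).re := by
    have h0 := integral_re hint
    simp only [RCLike.re_to_complex] at h0
    rw [← h0]
    simp_rw [← hre]
  have h2 : ∀ i : Fin d, (Complex.I * z i) ^ 2 = Complex.ofReal (-(z i ^ 2)) := by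
    intro i
    rw [mul_pow, Complex.I_sq]
    push_cast
    ring
  have hsum : (∑ i, (Complex.I * z i) ^ 2) = Complex.ofReal (-(∑ i, z i ^ 2)) := by
    simp_rw [h2]
    rw [← Complex.ofReal_sum]
    push_cast
    rw [Finset.sum_neg_distrib]
  have hpow : ((π : ℂ) / t) ^ ((Fintype.card (Fin d) : ℂ) / 2)
      = Complex.ofReal ((π / t) ^ ((d : ℝ) / 2)) := by
    have hpt : (0 : ℝ) ≤ π / t := le_of_lt (div_pos pi_pos ht)
    rw [Complex.ofReal_cpow hpt]
    push_cast
    norm_num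
  calc ∫ p : Rd d, Real.exp (-t * ∑ i, p i ^ 2) * Real.cos (∑ i, p i * z i)
      = (∫ v : Rd d, Complex.exp (-(t:ℂ) * ∑ i, (v i : ℂ) ^ 2
          + ∑ i, (Complex.I * z i) * v i)).re := h1
    _ = (((π : ℂ) / t) ^ ((Fintype.card (Fin d) : ℂ) / 2)
          * Complex.exp ((∑ i, (Complex.I * z i) ^ 2) / (4 * t))).re := by rw [key]
    _ = (π / t) ^ ((d : ℝ) / 2) * Real.exp (-(∑ i, z i ^ 2) / (4 * t)) := by
        rw [hsum, hpow]
        rw [show (Complex.ofReal (-(∑ i, z i ^ 2)) / (4 * (t:ℂ)))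
            = Complex.ofReal (-(∑ i, z i ^ 2) / (4 * t)) by push_cast; ring]
        rw [← Complex.ofReal_exp, ← Complex.ofReal_mul, Complex.ofReal_re]

lemma cont_gauss_shift (y : Rd d) (c : ℝ) :
    Continuous fun x : Rd d => Real.exp (-(∑ i, (x i - y i) ^ 2) / c) :=
  Real.continuous_exp.comp <| Continuous.div_const (Continuous.neg <|
    continuous_finset_sum _ fun i _ => ((continuous_apply i).sub continuous_const).pow 2) c

lemma gauss_shift_le_one {y : Rd d} {c : ℝ} (hc : 0 < c) (x : Rd d) :
    |Real.exp (-(∑ i, (x i - y i) ^ 2) / c)| ≤ 1 := by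
  rw [abs_of_pos (Real.exp_pos _)]
  apply Real.exp_le_one_iff.mpr
  apply div_nonpos_of_nonpos_of_nonneg _ hc.le
  simp only [neg_nonpos]
  exact Finset.sum_nonneg fun i _ => sq_nonneg _

set_option maxHeartbeats 1000000 in
lemma transform_identity {g : Rd d → ℝ} (hgi : Integrable g) (hgc : Continuous g)
    (hge : ∀ x, g x = g (-x)) {t : ℝ} (ht : 0 < t) (y : Rd d) :
    ∫ p, fourierEven d g p * (Real.exp (-t * ∑ i, p i ^ 2) * Real.cos (∑ i, p i * y i))
      = (π / t) ^ ((d : ℝ) / 2)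
        * ∫ x, g x * Real.exp (-(∑ i, (x i - y i) ^ 2) / (4 * t)) := by
  have h4t : (0:ℝ) < 4 * t := by linarith
  -- joint integrability
  have hprod : Integrable (fun q : Rd d × Rd d =>
      g q.2 * Real.cos (∑ i, q.1 i * q.2 i)
        * (Real.exp (-t * ∑ i, q.1 i ^ 2) * Real.cos (∑ i, q.1 i * y i)))
      ((volume : Measure (Rd d)).prod volume) := by
    have h0 : Integrable (fun q : Rd d × Rd d => Real.exp (-t * ∑ i, q.1 i ^ 2) * |g q.2|)
        ((volume : Measure (Rd d)).prod volume) := (integrable_gauss ht).mul_prod hgi.abs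
    refine h0.mono' ?_ (.of_forall fun q => ?_)
    · refine Continuous.aestronglyMeasurable ?_
      refine ((hgc.comp continuous_snd).mul (Real.continuous_cos.comp ?_)).mul
        (((Real.continuous_exp.comp ?_)).mul (Real.continuous_cos.comp ?_))
      · exact continuous_finset_sum _ fun i _ =>
          ((continuous_apply i).comp continuous_fst).mul ((continuous_apply i).comp continuous_snd)
      · exact Continuous.mul continuous_const <|
          continuous_finset_sum _ fun i _ => ((continuous_apply i).comp continuous_fst).pow 2
      · exact continuous_finset_sum _ fun i _ =>
          ((continuous_apply i).comp continuous_fst).mul continuous_const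
    · have e1 := Real.abs_cos_le_one (∑ i, q.1 i * q.2 i)
      have e2 := Real.abs_cos_le_one (∑ i, q.1 i * y i)
      have e3 := Real.exp_pos (-t * ∑ i, q.1 i ^ 2)
      have e4 := abs_nonneg (g q.2)
      rw [Real.norm_eq_abs, abs_mul, abs_mul, abs_mul, abs_of_pos e3]
      have b1 : |g q.2| * |Real.cos (∑ i, q.1 i * q.2 i)| ≤ |g q.2| :=
        mul_le_of_le_one_right e4 e1
      have b2 : Real.exp (-t * ∑ i, q.1 i ^ 2) * |Real.cos (∑ i, q.1 i * y i)|
          ≤ Real.exp (-t * ∑ i, q.1 i ^ 2) := mul_le_of_le_one_right e3.le e2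
      calc |g q.2| * |Real.cos (∑ i, q.1 i * q.2 i)|
            * (Real.exp (-t * ∑ i, q.1 i ^ 2) * |Real.cos (∑ i, q.1 i * y i)|)
          ≤ |g q.2| * Real.exp (-t * ∑ i, q.1 i ^ 2) :=
            mul_le_mul b1 b2 (by positivity) e4
        _ = Real.exp (-t * ∑ i, q.1 i ^ 2) * |g q.2| := mul_comm _ _
  -- pointwise inner integral computation
  have inner : ∀ x : Rd d,
      (∫ p : Rd d, g x * Real.cos (∑ i, p i * x i)
        * (Real.exp (-t * ∑ i, p i ^ 2) * Real.cos (∑ i, p i * y i)))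
      = g x * ((π / t) ^ ((d : ℝ) / 2)
          * ((Real.exp (-(∑ i, (x i - y i) ^ 2) / (4 * t))
            + Real.exp (-(∑ i, (x i + y i) ^ 2) / (4 * t))) / 2)) := by
    intro x
    have hpt : ∀ p : Rd d, g x * Real.cos (∑ i, p i * x i)
        * (Real.exp (-t * ∑ i, p i ^ 2) * Real.cos (∑ i, p i * y i))
        = g x * ((Real.exp (-t * ∑ i, p i ^ 2) * Real.cos (∑ i, p i * (x i - y i))
            + Real.exp (-t * ∑ i, p i ^ 2) * Real.cos (∑ i, p i * (x i + y i))) / 2) := by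
      intro p
      have hsub : (∑ i, p i * (x i - y i)) = (∑ i, p i * x i) - (∑ i, p i * y i) := by
        rw [← Finset.sum_sub_distrib]
        exact Finset.sum_congr rfl fun i _ => by ring
      have hadd : (∑ i, p i * (x i + y i)) = (∑ i, p i * x i) + (∑ i, p i * y i) := by
        rw [← Finset.sum_add_distrib]
        exact Finset.sum_congr rfl fun i _ => by ring
      rw [hsub, hadd, Real.cos_sub, Real.cos_add]
      ring
    simp_rw [hpt]
    rw [integral_const_mul]
    congr 1
    rw [integral_div, integral_add (integrable_mul_cos (integrable_gauss ht) (cont_ip _))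
      (integrable_mul_cos (integrable_gauss ht) (cont_ip _))]
    rw [gauss_cos ht (fun i => x i - y i), gauss_cos ht (fun i => x i + y i)]
    ring
  -- symmetry of the two Gaussian terms
  have hsym : (∫ x, g x * Real.exp (-(∑ i, (x i + y i) ^ 2) / (4 * t)))
      = ∫ x, g x * Real.exp (-(∑ i, (x i - y i) ^ 2) / (4 * t)) := by
    rw [← integral_neg_eq_self (fun x => g x * Real.exp (-(∑ i, (x i + y i) ^ 2) / (4 * t)))
      volume]
    congr 1 with x
    rw [← hge x]
    have hs : (∑ i, ((-x) i + y i) ^ 2) = ∑ i, (x i - y i) ^ 2 :=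
      Finset.sum_congr rfl fun i _ => by simp only [Pi.neg_apply]; ring
    rw [hs]
  -- integrabilities
  have hint1 : Integrable fun x => g x * Real.exp (-(∑ i, (x i - y i) ^ 2) / (4 * t)) :=
    integrable_mul_bdd hgi (cont_gauss_shift y (4*t)) (gauss_shift_le_one h4t)
  have c1 : (∫ p, fourierEven d g p * (Real.exp (-t * ∑ i, p i ^ 2) * Real.cos (∑ i, p i * y i)))
      = ∫ p : Rd d, ∫ x, g x * Real.cos (∑ i, p i * x i)
          * (Real.exp (-t * ∑ i, p i ^ 2) * Real.cos (∑ i, p i * y i)) := by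
    unfold fourierEven
    congr 1 with p
    rw [← integral_mul_const]
  have c2 := integral_integral_swap (f := fun p x : Rd d => g x * Real.cos (∑ i, p i * x i)
    * (Real.exp (-t * ∑ i, p i ^ 2) * Real.cos (∑ i, p i * y i))) hprod
  rw [c1, c2]
  simp_rw [inner]
  rw [← integral_const_mul]
  have hx : ∀ x : Rd d, g x * ((π / t) ^ ((d : ℝ) / 2)
      * ((Real.exp (-(∑ i, (x i - y i) ^ 2) / (4 * t))
        + Real.exp (-(∑ i, (x i + y i) ^ 2) / (4 * t))) / 2))
      = (π / t) ^ ((d : ℝ) / 2) * ((g x * Real.exp (-(∑ i, (x i - y i) ^ 2) / (4 * t))) / 2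
        + (g x * Real.exp (-(∑ i, (x i + y i) ^ 2) / (4 * t))) / 2) := fun x => by ring
  simp_rw [hx]
  rw [integral_const_mul, integral_const_mul]
  congr 1
  have hint2 : Integrable fun x => g x * Real.exp (-(∑ i, (x i + y i) ^ 2) / (4 * t)) := by
    have : Continuous fun x : Rd d => Real.exp (-(∑ i, (x i + y i) ^ 2) / (4 * t)) :=
      Real.continuous_exp.comp <| Continuous.div_const (Continuous.neg <|
        continuous_finset_sum _ fun i _ =>
          ((continuous_apply i).add continuous_const).pow 2) _
    refine integrable_mul_bdd hgi this fun x => ?_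
    rw [abs_of_pos (Real.exp_pos _)]
    apply Real.exp_le_one_iff.mpr
    apply div_nonpos_of_nonpos_of_nonneg _ h4t.le
    simp only [neg_nonpos]
    exact Finset.sum_nonneg fun i _ => sq_nonneg _
  rw [integral_add (hint1.div_const 2) (hint2.div_const 2), integral_div, integral_div, hsym]
  ring

lemma subst_scale {g : Rd d → ℝ} {t : ℝ} (ht : 0 < t) (y : Rd d) :
    (∫ x, g x * Real.exp (-(∑ i, (x i - y i) ^ 2) / (4 * t)))
      = (2 * Real.sqrt t) ^ d
        * ∫ u, g (y + (2 * Real.sqrt t) • u) * Real.exp (-∑ i, u i ^ 2) := by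
  set s : ℝ := 2 * Real.sqrt t with hs
  have hspos : 0 < s := by positivity
  have hs2 : s ^ 2 = 4 * t := by
    rw [hs, mul_pow, sq_sqrt ht.le]; ring
  have htrans : (∫ x, g x * Real.exp (-(∑ i, (x i - y i) ^ 2) / (4 * t)))
      = ∫ w, g (y + w) * Real.exp (-(∑ i, w i ^ 2) / (4 * t)) := by
    rw [← integral_add_left_eq_self
      (fun x : Rd d => g x * Real.exp (-(∑ i, (x i - y i) ^ 2) / (4 * t))) y]
    congr 1 with w
    have hss : ∀ i : Fin d, ((y + w) i - y i) ^ 2 = w i ^ 2 := fun i => by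
      simp [Pi.add_apply, add_sub_cancel_left]
    simp_rw [hss]
  rw [htrans]
  have hscale := MeasureTheory.Measure.integral_comp_smul (volume : Measure (Rd d))
    (fun w : Rd d => g (y + w) * Real.exp (-(∑ i, w i ^ 2) / (4 * t))) s
  have hrank : Module.finrank ℝ (Rd d) = d := Module.finrank_fintype_fun_eq_card ℝ |>.trans (by simp)
  rw [hrank] at hscale
  have hpt : ∀ u : Rd d, g (y + s • u) * Real.exp (-(∑ i, (s • u) i ^ 2) / (4 * t))
      = g (y + s • u) * Real.exp (-∑ i, u i ^ 2) := by
    intro u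
    congr 2
    have h0 : (∑ i, (s • u) i ^ 2) = s ^ 2 * ∑ i, u i ^ 2 := by
      rw [Finset.mul_sum]
      exact Finset.sum_congr rfl fun i _ => by
        simp only [Pi.smul_apply, smul_eq_mul]; ring
    rw [h0, hs2]
    field_simp
  simp_rw [hpt] at hscale
  rw [hscale, abs_of_pos (by positivity : (0:ℝ) < (s ^ d)⁻¹), smul_eq_mul, ← mul_assoc,
    mul_inv_cancel₀ (pow_pos hspos d).ne', one_mul]

lemma integrable_gauss' : Integrable fun u : Rd d => Real.exp (-∑ k, u k ^ 2) := by
  have := integrable_gauss (d := d) one_pos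
  simpa using this

set_option maxHeartbeats 1000000 in
lemma key_nonneg {g : Rd d → ℝ} (hgi : Integrable g) (hgc : Continuous g)
    (hge : ∀ x, g x = g (-x)) {C : ℝ} (hgb : ∀ x, |g x| ≤ C)
    (hhat : ∀ p, 0 ≤ fourierEven d g p) (n : ℕ) (x : Fin n → Rd d) :
    0 ≤ ∑ i : Fin n, ∑ j : Fin n, g (x i - x j) := by
  set Cd : ℝ := ∫ u : Rd d, Real.exp (-∑ k, u k ^ 2) with hCd
  have hCdval : Cd = π ^ ((d : ℝ) / 2) := by
    have h1 := gauss_cos (d := d) one_pos 0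
    simp only [Pi.zero_apply, mul_zero, Finset.sum_const_zero, Real.cos_zero, mul_one,
      ne_eq, OfNat.ofNat_ne_zero, not_false_eq_true, zero_pow, neg_zero, zero_div,
      Real.exp_zero, div_one, neg_mul, one_mul] at h1
    rw [hCd, h1]
  have hCdpos : 0 < Cd := by
    rw [hCdval]; exact Real.rpow_pos_of_pos pi_pos _
  -- the mollified sums
  set F : ℝ → ℝ := fun s => ∑ i : Fin n, ∑ j : Fin n,
    ∫ u : Rd d, g (x i - x j + s • u) * Real.exp (-∑ k, u k ^ 2) with hF
  -- nonnegativity for positive s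
  have hFpos : ∀ s : ℝ, 0 < s → 0 ≤ F s := by
    intro s hs
    set t : ℝ := (s / 2) ^ 2 with htdef
    have ht : 0 < t := by positivity
    have hst : 2 * Real.sqrt t = s := by
      rw [htdef, Real.sqrt_sq (by linarith : 0 ≤ s / 2)]; ring
    -- integrability of each p-term
    have hterm : ∀ y : Rd d, Integrable fun p : Rd d =>
        fourierEven d g p * (Real.exp (-t * ∑ k, p k ^ 2) * Real.cos (∑ k, p k * y k)) := by
      intro y
      have h0 : Integrable fun p : Rd d => (∫ z, |g z|) * Real.exp (-t * ∑ k, p k ^ 2) :=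
        (integrable_gauss ht).const_mul _
      refine h0.mono' ?_ (.of_forall fun p => ?_)
      · exact ((continuous_fourierEven hgi).mul ((Real.continuous_exp.comp
          (continuous_const.mul (continuous_finset_sum _ fun k _ =>
            (continuous_apply k).pow 2))).mul (Real.continuous_cos.comp (cont_ip y)))
          ).aestronglyMeasurable
      · rw [Real.norm_eq_abs, abs_mul, abs_mul, abs_of_pos (Real.exp_pos _)]
        have b1 := abs_fourierEven_le hgi p
        have b2 : Real.exp (-t * ∑ k, p k ^ 2) * |Real.cos (∑ k, p k * y k)|
            ≤ Real.exp (-t * ∑ k, p k ^ 2) :=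
          mul_le_of_le_one_right (Real.exp_pos _).le (Real.abs_cos_le_one _)
        exact mul_le_mul b1 b2 (by positivity) ((abs_nonneg _).trans b1)
    -- step B : the quadratic-form positivity
    have hB : 0 ≤ ∑ i : Fin n, ∑ j : Fin n, ∫ p : Rd d,
        fourierEven d g p * (Real.exp (-t * ∑ k, p k ^ 2)
          * Real.cos (∑ k, p k * (x i - x j) k)) := by
      have hswap : ∀ i : Fin n, (∑ j : Fin n, ∫ p : Rd d,
          fourierEven d g p * (Real.exp (-t * ∑ k, p k ^ 2)
            * Real.cos (∑ k, p k * (x i - x j) k)))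
          = ∫ p : Rd d, ∑ j : Fin n, fourierEven d g p * (Real.exp (-t * ∑ k, p k ^ 2)
            * Real.cos (∑ k, p k * (x i - x j) k)) := fun i =>
        (integral_finset_sum _ fun j _ => hterm _).symm
      simp_rw [hswap]
      rw [← integral_finset_sum _ fun i _ => integrable_finset_sum _ fun j _ => hterm _]
      refine integral_nonneg fun p => ?_
      have hsplit : ∀ i j : Fin n, Real.cos (∑ k, p k * (x i - x j) k)
          = Real.cos (∑ k, p k * x i k) * Real.cos (∑ k, p k * x j k)
            + Real.sin (∑ k, p k * x i k) * Real.sin (∑ k, p k * x j k) := by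
        intro i j
        rw [← Real.cos_sub]
        congr 1
        rw [← Finset.sum_sub_distrib]
        exact Finset.sum_congr rfl fun k _ => by
          simp only [Pi.sub_apply]; ring
      have hKnn : 0 ≤ ∑ i : Fin n, ∑ j : Fin n, Real.cos (∑ k, p k * (x i - x j) k) := by
        simp_rw [hsplit]
        rw [show (∑ i : Fin n, ∑ j : Fin n,
            (Real.cos (∑ k, p k * x i k) * Real.cos (∑ k, p k * x j k)
              + Real.sin (∑ k, p k * x i k) * Real.sin (∑ k, p k * x j k)))
            = (∑ i : Fin n, Real.cos (∑ k, p k * x i k)) ^ 2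
              + (∑ i : Fin n, Real.sin (∑ k, p k * x i k)) ^ 2 by
          rw [sq, sq, Finset.sum_mul_sum, Finset.sum_mul_sum, ← Finset.sum_add_distrib]
          exact Finset.sum_congr rfl fun i _ => by rw [← Finset.sum_add_distrib]]
        positivity
      calc (0:ℝ) ≤ fourierEven d g p * Real.exp (-t * ∑ k, p k ^ 2)
            * ∑ i : Fin n, ∑ j : Fin n, Real.cos (∑ k, p k * (x i - x j) k) :=
            mul_nonneg (mul_nonneg (hhat p) (Real.exp_pos _).le) hKnn
        _ = ∑ i : Fin n, ∑ j : Fin n, fourierEven d g p * (Real.exp (-t * ∑ k, p k ^ 2)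
            * Real.cos (∑ k, p k * (x i - x j) k)) := by
            rw [Finset.mul_sum]
            exact Finset.sum_congr rfl fun i _ => by
              rw [Finset.mul_sum]
              exact Finset.sum_congr rfl fun j _ => by ring
    -- rewrite each term using the transform identity and scaling
    have hident : ∀ i j : Fin n, (∫ p : Rd d,
        fourierEven d g p * (Real.exp (-t * ∑ k, p k ^ 2)
          * Real.cos (∑ k, p k * (x i - x j) k)))
        = (π / t) ^ ((d : ℝ) / 2) * (s ^ d
            * ∫ u : Rd d, g (x i - x j + s • u) * Real.exp (-∑ k, u k ^ 2)) := by
      intro i j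
      rw [transform_identity hgi hgc hge ht (x i - x j)]
      congr 1
      have := subst_scale (g := g) ht (x i - x j)
      rw [hst] at this
      rw [← this]
    have hBF : 0 ≤ (π / t) ^ ((d : ℝ) / 2) * (s ^ d * F s) := by
      calc (0:ℝ) ≤ ∑ i : Fin n, ∑ j : Fin n, ∫ p : Rd d,
          fourierEven d g p * (Real.exp (-t * ∑ k, p k ^ 2)
            * Real.cos (∑ k, p k * (x i - x j) k)) := hB
        _ = (π / t) ^ ((d : ℝ) / 2) * (s ^ d * F s) := by
          simp_rw [hident]
          rw [hF, Finset.mul_sum, Finset.mul_sum]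
          exact Finset.sum_congr rfl fun i _ => by
            rw [Finset.mul_sum, Finset.mul_sum]
    have hc : 0 < (π / t) ^ ((d : ℝ) / 2) * s ^ d := by positivity
    rw [← mul_assoc] at hBF
    exact le_of_mul_le_mul_left (by rw [mul_zero]; exact hBF) hc
  -- continuity at 0
  have htend : Filter.Tendsto F (nhdsWithin 0 (Set.Ioi 0)) (nhds (F 0)) := by
    have hc : Continuous F := by
      apply continuous_finset_sum
      intro i _
      apply continuous_finset_sum
      intro j _
      rw [continuous_iff_continuousAt]
      intro s₀
      apply continuousAt_of_dominated (bound := fun u : Rd d => C * Real.exp (-∑ k, u k ^ 2))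
      · refine .of_forall fun s => Continuous.aestronglyMeasurable ?_
        exact (hgc.comp (continuous_const.add (continuous_id.const_smul s))).mul
          (Real.continuous_exp.comp (Continuous.neg (continuous_finset_sum _ fun k _ =>
            (continuous_apply k).pow 2)))
      · exact .of_forall fun s => .of_forall fun u => by
          rw [Real.norm_eq_abs, abs_mul, abs_of_pos (Real.exp_pos _)]
          exact mul_le_mul_of_nonneg_right (hgb _) (Real.exp_pos _).le
      · exact integrable_gauss'.const_mul C
      · exact .of_forall fun u => Continuous.continuousAt <|
          (hgc.comp (continuous_const.add
            ((continuous_id.smul continuous_const)))).mul continuous_const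
    exact hc.continuousAt.tendsto.mono_left nhdsWithin_le_nhds
  have hF0 : F 0 = (∑ i : Fin n, ∑ j : Fin n, g (x i - x j)) * Cd := by
    rw [hF]
    simp only [zero_smul, add_zero]
    rw [Finset.sum_mul]
    refine Finset.sum_congr rfl fun i _ => ?_
    rw [Finset.sum_mul]
    refine Finset.sum_congr rfl fun j _ => ?_
    rw [hCd, ← integral_const_mul]
  have hev : ∀ᶠ s in nhdsWithin 0 (Set.Ioi 0), 0 ≤ F s := by
    filter_upwards [self_mem_nhdsWithin] with s hs using hFpos s hs
  have h0le : 0 ≤ F 0 := ge_of_tendsto htend hev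
  rw [hF0] at h0le
  exact (mul_nonneg_iff_of_pos_right hCdpos).mp h0le

/-- Condition (3.22) implies the stability assumption (2.11): if `α, κ₁, κ₂` are
continuous, bounded, integrable, even, nonnegative, `∫α = 1`, and
`(1 - α̂(p))(κ̂₁(p) - κ̂₂(p)) ≥ 0` for all `p`, then with
`ω = κ₁(0) - (α∗κ₁)(0) + (α∗κ₂)(0) - κ₂(0)`, `φ₊ = (α∗κ₁) + κ₂`,
`φ₋ = κ₁ + (α∗κ₂)` one has `ω ≥ 0` and `Φ₊ ≤ Φ₋ + ωn` for all `n ≥ 1` and tuples. -/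
theorem sufficient_condition_for_stability (d : ℕ) (hd : 1 ≤ d)
    (α κ₁ κ₂ : Rd d → ℝ)
    (hα_cont : Continuous α) (hκ₁_cont : Continuous κ₁) (hκ₂_cont : Continuous κ₂)
    (hα_bdd : ∃ M, ∀ x, α x ≤ M) (hκ₁_bdd : ∃ M, ∀ x, κ₁ x ≤ M)
    (hκ₂_bdd : ∃ M, ∀ x, κ₂ x ≤ M)
    (hα_int : Integrable α) (hκ₁_int : Integrable κ₁) (hκ₂_int : Integrable κ₂)
    (hα_even : ∀ x, α x = α (-x)) (hκ₁_even : ∀ x, κ₁ x = κ₁ (-x))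
    (hκ₂_even : ∀ x, κ₂ x = κ₂ (-x))
    (hα_pos : ∀ x, 0 ≤ α x) (hκ₁_pos : ∀ x, 0 ≤ κ₁ x) (hκ₂_pos : ∀ x, 0 ≤ κ₂ x)
    (hα_one : (∫ x, α x) = 1)
    (hft : ∀ p : Rd d, 0 ≤ (1 - fourierEven d α p) * (fourierEven d κ₁ p - fourierEven d κ₂ p))
    (φp φm : Rd d → Rd d → ℝ)
    (hφp : ∀ x y, φp x y = conv d α κ₁ (x - y) + κ₂ (x - y))
    (hφm : ∀ x y, φm x y = κ₁ (x - y) + conv d α κ₂ (x - y))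
    (ω : ℝ) (hωdef : ω = κ₁ 0 - conv d α κ₁ 0 + conv d α κ₂ 0 - κ₂ 0) :
    0 ≤ ω ∧
    ∀ n : ℕ, 1 ≤ n → ∀ x : Fin n → Rd d,
      (∑ i : Fin n, ∑ j ∈ Finset.univ.erase i, φp (x i) (x j)) ≤
        (∑ i : Fin n, ∑ j ∈ Finset.univ.erase i, φm (x i) (x j)) + ω * n := by
  obtain ⟨M₁, hM₁⟩ := hκ₁_bdd
  obtain ⟨M₂, hM₂⟩ := hκ₂_bdd
  obtain ⟨Mα, hMα⟩ := hα_bdd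
  have habs1 : ∀ x, |κ₁ x| ≤ M₁ := fun x => by rw [abs_of_nonneg (hκ₁_pos x)]; exact hM₁ x
  have habs2 : ∀ x, |κ₂ x| ≤ M₂ := fun x => by rw [abs_of_nonneg (hκ₂_pos x)]; exact hM₂ x
  have habsα : ∀ x, |α x| ≤ Mα := fun x => by rw [abs_of_nonneg (hα_pos x)]; exact hMα x
  set G : Rd d → ℝ := fun u => κ₁ u - conv d α κ₁ u + conv d α κ₂ u - κ₂ u with hG
  have hc1 : Continuous (conv d α κ₁) := continuous_conv hα_cont habsα hκ₁_int hκ₁_cont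
  have hc2 : Continuous (conv d α κ₂) := continuous_conv hα_cont habsα hκ₂_int hκ₂_cont
  have hi1 : Integrable (conv d α κ₁) := integrable_conv hα_int hκ₁_int
  have hi2 : Integrable (conv d α κ₂) := integrable_conv hα_int hκ₂_int
  have hGi : Integrable G := ((hκ₁_int.sub hi1).add hi2).sub hκ₂_int
  have hGc : Continuous G := ((hκ₁_cont.sub hc1).add hc2).sub hκ₂_cont
  have hGe : ∀ u, G u = G (-u) := by
    intro u
    rw [hG]
    simp only
    rw [conv_even hα_even hκ₁_even u, conv_even hα_even hκ₂_even u,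
      ← hκ₁_even u, ← hκ₂_even u]
  have hGb : ∀ u, |G u| ≤ M₁ + M₁ + M₂ + M₂ := by
    intro u
    have b1 : |conv d α κ₁ u| ≤ M₁ := by
      rw [abs_of_nonneg (conv_nonneg hα_pos hκ₁_pos u)]
      exact conv_le hα_int hα_one hα_pos hκ₁_cont hκ₁_pos hM₁ u
    have b2 : |conv d α κ₂ u| ≤ M₂ := by
      rw [abs_of_nonneg (conv_nonneg hα_pos hκ₂_pos u)]
      exact conv_le hα_int hα_one hα_pos hκ₂_cont hκ₂_pos hM₂ u
    have := abs_sub (κ₁ u - conv d α κ₁ u + conv d α κ₂ u) (κ₂ u)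
    calc |G u| ≤ |κ₁ u - conv d α κ₁ u + conv d α κ₂ u| + |κ₂ u| := abs_sub _ _
      _ ≤ |κ₁ u - conv d α κ₁ u| + |conv d α κ₂ u| + |κ₂ u| := by
          have := abs_add_le (κ₁ u - conv d α κ₁ u) (conv d α κ₂ u)
          linarith
      _ ≤ |κ₁ u| + |conv d α κ₁ u| + |conv d α κ₂ u| + |κ₂ u| := by
          have := abs_sub (κ₁ u) (conv d α κ₁ u)
          linarith
      _ ≤ M₁ + M₁ + M₂ + M₂ := by
          have := habs1 u; have := habs2 u
          linarith
  have hGhat : ∀ p, fourierEven d G p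
      = (1 - fourierEven d α p) * (fourierEven d κ₁ p - fourierEven d κ₂ p) := by
    intro p
    have e1 : fourierEven d G p
        = fourierEven d κ₁ p - fourierEven d (conv d α κ₁) p
          + fourierEven d (conv d α κ₂) p - fourierEven d κ₂ p := by
      unfold fourierEven
      rw [hG]
      simp only
      have q1 := integrable_mul_cos hκ₁_int (cont_ip' p)
      have q2 := integrable_mul_cos hi1 (cont_ip' p)
      have q3 := integrable_mul_cos hi2 (cont_ip' p)
      have q4 := integrable_mul_cos hκ₂_int (cont_ip' p)
      have hpt : ∀ x : Rd d, (κ₁ x - conv d α κ₁ x + conv d α κ₂ x - κ₂ x)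
          * Real.cos (∑ i, p i * x i)
          = κ₁ x * Real.cos (∑ i, p i * x i) - conv d α κ₁ x * Real.cos (∑ i, p i * x i)
            + conv d α κ₂ x * Real.cos (∑ i, p i * x i)
            - κ₂ x * Real.cos (∑ i, p i * x i) := fun x => by ring
      simp_rw [hpt]
      have q12 : Integrable (fun x => κ₁ x * Real.cos (∑ i, p i * x i)
          - conv d α κ₁ x * Real.cos (∑ i, p i * x i)) volume := q1.sub q2
      have q123 : Integrable (fun x => (κ₁ x * Real.cos (∑ i, p i * x i)
          - conv d α κ₁ x * Real.cos (∑ i, p i * x i))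
          + conv d α κ₂ x * Real.cos (∑ i, p i * x i)) volume := q12.add q3
      rw [integral_sub q123 q4, integral_add q12 q3, integral_sub q1 q2]
    rw [e1, fourierEven_conv hα_int hκ₁_int hα_even hκ₁_cont habs1 p,
      fourierEven_conv hα_int hκ₂_int hα_even hκ₂_cont habs2 p]
    ring
  have hS : ∀ n : ℕ, ∀ x : Fin n → Rd d, 0 ≤ ∑ i : Fin n, ∑ j : Fin n, G (x i - x j) :=
    fun n x => key_nonneg hGi hGc hGe hGb (fun p => (hGhat p).symm ▸ hft p) n x
  have hωG : ω = G 0 := by rw [hωdef, hG]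
  constructor
  · have h1 := hS 1 (fun _ => 0)
    simp only [Finset.sum_const, Finset.card_univ, Fintype.card_fin, one_smul,
      Fin.sum_univ_one, sub_self] at h1
    rw [hωG]
    simpa using h1
  · intro n hn x
    have hD := hS n x
    have hsplit : ∀ i : Fin n, (∑ j : Fin n, G (x i - x j))
        = G 0 + ∑ j ∈ Finset.univ.erase i, G (x i - x j) := by
      intro i
      rw [← Finset.add_sum_erase Finset.univ _ (Finset.mem_univ i), sub_self]
    rw [Finset.sum_congr rfl (fun i _ => hsplit i), Finset.sum_add_distrib,
      Finset.sum_const, Finset.card_univ, Fintype.card_fin] at hD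
    have hpm : ∀ i j : Fin n, φm (x i) (x j) - φp (x i) (x j) = G (x i - x j) := by
      intro i j
      rw [hφm, hφp, hG]
      ring
    have hsub : (∑ i : Fin n, ∑ j ∈ Finset.univ.erase i, φm (x i) (x j))
        - (∑ i : Fin n, ∑ j ∈ Finset.univ.erase i, φp (x i) (x j))
        = ∑ i : Fin n, ∑ j ∈ Finset.univ.erase i, G (x i - x j) := by
      rw [← Finset.sum_sub_distrib]
      refine Finset.sum_congr rfl fun i _ => ?_
      rw [← Finset.sum_sub_distrib]
      exact Finset.sum_congr rfl fun j _ => hpm i j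
    have hns : (n : ℝ) * G 0 + (∑ i : Fin n, ∑ j ∈ Finset.univ.erase i, G (x i - x j)) ≥ 0 := by
      have : (n • G 0 : ℝ) = (n : ℝ) * G 0 := nsmul_eq_mul n (G 0)
      linarith [hD, this.symm ▸ hD]
    rw [hωG]
    linarith [hsub, hns]

end Kawasaki
end
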